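/- arXiv:1303.0592 — 9 statements merged into one kernel-verified Lean document; each statement's English description precedes it below -/
import Mathlib

section
/- For α > 0 and integer β ≥ 2, the integral I(α,β) = ∫_0^∞ e^{-αx}/(1+x)^β dx satisfies I(α,β) = ((-1)^{β-1} α^{β-1} e^α E_1(α))/(β-1)! + Σ_{i=1}^{β-1} ((i-1)!/(β-1)!)·(-1)^{β-i-1}·α^{β-i-1}, where E_1(α) = ∫_α^∞ e^{-t}/t dt. -/
open Finset Real MeasureTheory Set Filter

lemma integrable_aux (α : ℝ) (hα : 0 < α) (β : ℕ) :
    IntegrableOn (fun x => Real.exp (-α * x) / (1 + x) ^ β) (Set.Ioi (0:ℝ)) := by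
  apply Integrable.mono (exp_neg_integrableOn_Ioi 0 hα)
  · apply ContinuousOn.aestronglyMeasurable _ measurableSet_Ioi
    apply ContinuousOn.div (by fun_prop) (by fun_prop)
    intro x hx
    have : (0:ℝ) < 1 + x := by simp at hx; linarith
    positivity
  · rw [ae_restrict_iff' measurableSet_Ioi]
    filter_upwards with x hx
    have h0 : (0:ℝ) < x := hx
    have h1 : (1:ℝ) ≤ (1 + x) ^ β := one_le_pow₀ (by linarith)
    rw [Real.norm_eq_abs, Real.norm_eq_abs, abs_of_nonneg (by positivity),
      abs_of_nonneg (Real.exp_nonneg _)]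
    rw [div_le_iff₀ (by positivity)]
    nlinarith [Real.exp_nonneg (-α * x)]

lemma base_case (α : ℝ) (hα : 0 < α) :
    ∫ x in Set.Ioi (0:ℝ), Real.exp (-α * x) / (1 + x) ^ 1 =
      Real.exp α * ∫ t in Set.Ioi α, Real.exp (-t) / t := by
  have himg1 : (fun x => α + α * x) '' Set.Ioi (0:ℝ) ⊆ Set.Ioi α := by
    rintro _ ⟨x, hx, rfl⟩
    simp only [Set.mem_Ioi] at hx ⊢; nlinarith
  have himg2 : (fun x => α + α * x) '' Set.Ici (0:ℝ) ⊆ Set.Ici α := by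
    rintro _ ⟨x, hx, rfl⟩
    simp only [Set.mem_Ici] at hx ⊢; nlinarith
  have hcontg : ContinuousOn (fun t => Real.exp α * (Real.exp (-t) / t)) (Set.Ioi α) := by
    apply ContinuousOn.mul continuousOn_const
    apply ContinuousOn.div (by fun_prop) (by fun_prop)
    intro t ht
    exact ne_of_gt (hα.trans ht)
  have hgInt : IntegrableOn (fun t => Real.exp α * (Real.exp (-t) / t)) (Set.Ici α) := by
    rw [integrableOn_Ici_iff_integrableOn_Ioi]
    apply Integrable.mono ((exp_neg_integrableOn_Ioi α one_pos).const_mul (Real.exp α * α⁻¹))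
    · exact hcontg.aestronglyMeasurable measurableSet_Ioi
    · rw [ae_restrict_iff' measurableSet_Ioi]
      filter_upwards with t ht
      have h0 : α < t := ht
      have h0' : (0:ℝ) < t := hα.trans h0
      rw [Real.norm_eq_abs, Real.norm_eq_abs, abs_of_nonneg (by positivity),
        abs_of_nonneg (by positivity), neg_one_mul]
      have h1 : Real.exp (-t) / t ≤ Real.exp (-t) / α :=
        div_le_div_of_nonneg_left (Real.exp_nonneg _) hα h0.le
      calc Real.exp α * (Real.exp (-t) / t) ≤ Real.exp α * (Real.exp (-t) / α) :=
            mul_le_mul_of_nonneg_left h1 (Real.exp_nonneg _)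
        _ = Real.exp α * α⁻¹ * Real.exp (-t) := by ring
  have hptwise : ∀ x : ℝ, 0 < x →
      Real.exp α * (Real.exp (-(α + α * x)) / (α + α * x)) * α
        = Real.exp (-α * x) / (1 + x) ^ 1 := by
    intro x hx
    have h1 : (0:ℝ) < 1 + x := by linarith
    rw [show -(α + α * x) = -α + -α * x by ring, Real.exp_add, Real.exp_neg α,
      show α + α * x = α * (1 + x) by ring, pow_one]
    field_simp
  have key := integral_comp_mul_deriv_Ioi (f := fun x => α + α * x) (f' := fun _ => α)
    (g := fun t => Real.exp α * (Real.exp (-t) / t)) (a := 0)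
    (by fun_prop)
    (tendsto_atTop_add_const_left _ α (Tendsto.const_mul_atTop hα tendsto_id))
    (fun x _ => by
      simpa using (((hasDerivAt_id x).const_mul α).const_add α).hasDerivWithinAt
        (s := Set.Ioi x))
    (hcontg.mono himg1) (hgInt.mono_set himg2) ?_
  · simp only [Function.comp_def, mul_zero, add_zero] at key
    rw [← integral_const_mul, ← key]
    apply setIntegral_congr_fun measurableSet_Ioi
    intro x hx
    exact (hptwise x hx).symm
  · rw [integrableOn_Ici_iff_integrableOn_Ioi]
    apply (integrable_aux α hα 1).congr_fun _ measurableSet_Ioi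
    intro x hx
    exact (hptwise x hx).symm

lemma recurrence (α : ℝ) (hα : 0 < α) (m : ℕ) :
    ∫ x in Set.Ioi (0:ℝ), Real.exp (-α * x) / (1 + x) ^ (m + 2) =
      1 / (m + 1 : ℝ) - (α / (m + 1 : ℝ)) *
        ∫ x in Set.Ioi (0:ℝ), Real.exp (-α * x) / (1 + x) ^ (m + 1) := by
  set F : ℝ → ℝ := fun x => -(1 / (m + 1 : ℝ)) * (Real.exp (-α * x) / (1 + x) ^ (m + 1))
    with hF
  set f' : ℝ → ℝ := fun x => (α / (m + 1 : ℝ)) * (Real.exp (-α * x) / (1 + x) ^ (m + 1))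
    + Real.exp (-α * x) / (1 + x) ^ (m + 2) with hf'
  have hderiv : ∀ x ∈ Set.Ioi (0:ℝ), HasDerivAt F (f' x) x := by
    intro x hx
    have h0 : (0:ℝ) < x := hx
    have h1 : (0:ℝ) < 1 + x := by linarith
    have he : HasDerivAt (fun x : ℝ => Real.exp (-α * x)) (-α * Real.exp (-α * x)) x := by
      have := (Real.hasDerivAt_exp (-α * x)).comp x ((hasDerivAt_id x).const_mul (-α))
      simpa [Function.comp_def, mul_comm] using this
    have hp : HasDerivAt (fun x : ℝ => (1 + x) ^ (m + 1))
        (((m : ℝ) + 1) * (1 + x) ^ m) x := by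
      have := ((hasDerivAt_id x).const_add 1).fun_pow (m + 1)
      simpa using this
    have hne : ((1:ℝ) + x) ^ (m + 1) ≠ 0 := by positivity
    have hdiv : HasDerivAt F _ x := (he.fun_div hp hne).const_mul (-(1 / (m + 1 : ℝ)))
    convert hdiv using 1
    rw [hf']
    have hm1 : ((m:ℝ) + 1) ≠ 0 := by positivity
    field_simp
    ring
  have hInt1 := integrable_aux α hα (m + 1)
  have hInt2 := integrable_aux α hα (m + 2)
  have hf'Int : IntegrableOn f' (Set.Ioi (0:ℝ)) := (hInt1.const_mul _).add hInt2
  have hlim : Tendsto F atTop (nhds 0) := by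
    rw [hF]
    have h1 : Tendsto (fun x : ℝ => Real.exp (-α * x)) atTop (nhds 0) := by
      have hmul : Tendsto (fun x : ℝ => α * x) atTop atTop :=
        Tendsto.const_mul_atTop hα tendsto_id
      have hneg : Tendsto (fun x : ℝ => -(α * x)) atTop atBot :=
        tendsto_neg_atTop_atBot.comp hmul
      have := Real.tendsto_exp_atBot.comp hneg
      simpa [Function.comp_def, neg_mul] using this
    have h2 : Tendsto (fun x : ℝ => ((1 + x) ^ (m + 1) : ℝ)⁻¹) atTop (nhds 0) := by
      apply Tendsto.inv_tendsto_atTop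
      have := (tendsto_pow_atTop (n := m + 1) (by omega)).comp
        (tendsto_atTop_add_const_left atTop (1:ℝ) tendsto_id)
      simpa [Function.comp_def] using this
    have := ((h1.mul h2).const_mul (-(1 / (m + 1 : ℝ))))
    simpa [div_eq_mul_inv] using this
  have hcont : ContinuousWithinAt F (Set.Ici (0:ℝ)) 0 := by
    apply ContinuousAt.continuousWithinAt
    apply ContinuousAt.mul continuousAt_const
    apply ContinuousAt.div (by fun_prop) (by fun_prop)
    norm_num
  have key := integral_Ioi_of_hasDerivAt_of_tendsto hcont hderiv hf'Int hlim
  have hF0 : F 0 = -(1 / (m + 1 : ℝ)) := by simp [hF]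
  rw [hF0] at key
  rw [hf'] at key
  rw [MeasureTheory.integral_add (hInt1.const_mul _) hInt2, MeasureTheory.integral_const_mul]
    at key
  have hm1 : ((m:ℝ) + 1) ≠ 0 := by positivity
  linarith [key]

lemma main_aux (α : ℝ) (hα : 0 < α) (n : ℕ) :
    ∫ x in Set.Ioi (0:ℝ), Real.exp (-α * x) / (1 + x) ^ (n + 1) =
      (-1 : ℝ) ^ n * α ^ n * Real.exp α * (∫ t in Set.Ioi α, Real.exp (-t) / t) /
          (Nat.factorial n : ℝ) +
        ∑ i ∈ Finset.Icc 1 n,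
          ((Nat.factorial (i - 1) : ℝ) / (Nat.factorial n : ℝ)) *
            (-1 : ℝ) ^ (n - i) * α ^ (n - i) := by
  induction n with
  | zero => simpa using base_case α hα
  | succ n ih =>
    rw [show n + 1 + 1 = n + 2 from rfl, recurrence α hα n, ih]
    have hfac : (Nat.factorial (n+1) : ℝ) = ((n:ℝ) + 1) * (Nat.factorial n : ℝ) := by
      rw [Nat.factorial_succ]; push_cast; ring
    have hn1 : ((n:ℝ) + 1) ≠ 0 := by positivity
    have hfn : (Nat.factorial n : ℝ) ≠ 0 := Nat.cast_ne_zero.mpr n.factorial_ne_zero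
    have hsplit : ∑ i ∈ Finset.Icc 1 (n+1),
        ((Nat.factorial (i - 1) : ℝ) / (Nat.factorial (n+1) : ℝ)) *
          (-1 : ℝ) ^ (n + 1 - i) * α ^ (n + 1 - i)
        = (∑ i ∈ Finset.Icc 1 n,
            ((Nat.factorial (i - 1) : ℝ) / (Nat.factorial (n+1) : ℝ)) *
              (-1 : ℝ) ^ (n + 1 - i) * α ^ (n + 1 - i)) + 1 / ((n:ℝ) + 1) := by
      rw [← Finset.insert_Icc_right_eq_Icc_add_one (by omega), Finset.sum_insert (by simp)]
      rw [show n + 1 - (n + 1) = 0 by omega, show (n+1) - 1 = n by omega]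
      rw [hfac]
      field_simp
      ring
    rw [hsplit]
    have hterm : ∑ i ∈ Finset.Icc 1 n,
        ((Nat.factorial (i - 1) : ℝ) / (Nat.factorial (n+1) : ℝ)) *
          (-1 : ℝ) ^ (n + 1 - i) * α ^ (n + 1 - i)
        = -(α / ((n:ℝ)+1)) * ∑ i ∈ Finset.Icc 1 n,
            ((Nat.factorial (i - 1) : ℝ) / (Nat.factorial n : ℝ)) *
              (-1 : ℝ) ^ (n - i) * α ^ (n - i) := by
      rw [Finset.mul_sum]
      apply Finset.sum_congr rfl
      intro i hi
      have hi' : 1 ≤ i ∧ i ≤ n := by simpa using hi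
      rw [show n + 1 - i = (n - i) + 1 by omega, pow_succ, pow_succ, hfac]
      field_simp
    rw [hterm, hfac]
    set E := ∫ t in Set.Ioi α, Real.exp (-t) / t
    set S := ∑ i ∈ Finset.Icc 1 n,
        ((Nat.factorial (i - 1) : ℝ) / (Nat.factorial n : ℝ)) *
          (-1 : ℝ) ^ (n - i) * α ^ (n - i)
    rw [pow_succ, pow_succ]
    field_simp
    ring

/-- Closed form for `I(α,β) = ∫_0^∞ e^{-αx}/(1+x)^β dx` with `β ≥ 2`, in terms of the
exponential integral `E₁(α) = ∫_α^∞ e^{-t}/t dt`. -/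
theorem integral_exp_div_pow_closed_form (α : ℝ) (hα : 0 < α) (β : ℕ) (hβ : 2 ≤ β) :
    ∫ x in Set.Ioi (0 : ℝ), Real.exp (-α * x) / (1 + x) ^ β =
      (-1 : ℝ) ^ (β - 1) * α ^ (β - 1) * Real.exp α *
          (∫ t in Set.Ioi α, Real.exp (-t) / t) / (Nat.factorial (β - 1) : ℝ) +
        ∑ i ∈ Finset.Icc 1 (β - 1),
          ((Nat.factorial (i - 1) : ℝ) / (Nat.factorial (β - 1) : ℝ)) *
            (-1 : ℝ) ^ (β - i - 1) * α ^ (β - i - 1) := by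
  obtain ⟨n, rfl⟩ : ∃ n, β = n + 1 := ⟨β - 1, by omega⟩
  rw [show n + 1 - 1 = n by omega]
  rw [main_aux α hα n]
  congr 1
  apply Finset.sum_congr rfl
  intro i hi
  have hi' : 1 ≤ i ∧ i ≤ n := by simpa using hi
  rw [show n + 1 - i - 1 = n - i by omega]
end

section
/- Let Z_1, ..., Z_K be independent with Z_k having continuous strictly increasing CDF F_k, and select k* = argmax_k F_k(Z_k). Then conditioned on k* = k, the CDF of Z_{k*} is (F_k)^K; i.e., P(Z_k ≤ t, k* = k) = (1/K)·(F_k(t))^K. -/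
open MeasureTheory ProbabilityTheory

section Aux

open Set Filter
open scoped Topology ENNReal

lemma aux_F_nonneg {Ω : Type*} [MeasurableSpace Ω] (μ : Measure Ω)
    (W : Ω → ℝ) (G : ℝ → ℝ)
    (hGdef : ∀ x, G x = (μ {ω | W ω ≤ x}).toReal) (x : ℝ) : 0 ≤ G x := by
  rw [hGdef]; exact ENNReal.toReal_nonneg

lemma aux_F_le_one {Ω : Type*} [MeasurableSpace Ω] (μ : Measure Ω) [IsProbabilityMeasure μ]
    (W : Ω → ℝ) (G : ℝ → ℝ)
    (hGdef : ∀ x, G x = (μ {ω | W ω ≤ x}).toReal) (x : ℝ) : G x ≤ 1 := by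
  rw [hGdef]
  have := prob_le_one (μ := μ) (s := {ω | W ω ≤ x})
  calc (μ {ω | W ω ≤ x}).toReal ≤ (1 : ℝ≥0∞).toReal :=
        ENNReal.toReal_mono (by simp) this
    _ = 1 := by simp

lemma aux_F_pos {Ω : Type*} [MeasurableSpace Ω] (μ : Measure Ω)
    (W : Ω → ℝ) (G : ℝ → ℝ)
    (hGdef : ∀ x, G x = (μ {ω | W ω ≤ x}).toReal) (hGm : StrictMono G) (x : ℝ) : 0 < G x :=
  lt_of_le_of_lt (aux_F_nonneg μ W G hGdef (x - 1)) (hGm (by linarith))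

lemma aux_F_lt_one {Ω : Type*} [MeasurableSpace Ω] (μ : Measure Ω) [IsProbabilityMeasure μ]
    (W : Ω → ℝ) (G : ℝ → ℝ)
    (hGdef : ∀ x, G x = (μ {ω | W ω ≤ x}).toReal) (hGm : StrictMono G) (x : ℝ) : G x < 1 :=
  lt_of_lt_of_le (hGm (by linarith : x < x + 1)) (aux_F_le_one μ W G hGdef (x + 1))

/-- probability integral transform: `G ∘ W` is uniform on `(0,1)`. -/
lemma aux_uniform_law {Ω : Type*} [MeasurableSpace Ω] (μ : Measure Ω) [IsProbabilityMeasure μ]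
    (W : Ω → ℝ) (hW : Measurable W) (G : ℝ → ℝ)
    (hGdef : ∀ x, G x = (μ {ω | W ω ≤ x}).toReal)
    (hGc : Continuous G) (hGm : StrictMono G) :
    μ.map (fun ω => G (W ω)) = volume.restrict (Set.Ioo (0:ℝ) 1) := by
  set ν : Measure ℝ := μ.map W with hν
  have hνprob : IsProbabilityMeasure ν := Measure.isProbabilityMeasure_map hW.aemeasurable
  have hGIic : ∀ x, ν (Iic x) = ENNReal.ofReal (G x) := by
    intro x
    rw [hν, Measure.map_apply hW measurableSet_Iic]
    have : W ⁻¹' (Iic x) = {ω | W ω ≤ x} := rfl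
    rw [this, hGdef, ENNReal.ofReal_toReal (measure_ne_top μ _)]
  have hGcdf : ∀ x, G x = cdf ν x := by
    intro x
    rw [cdf_eq_real, measureReal_def, hGIic, ENNReal.toReal_ofReal (aux_F_nonneg μ W G hGdef x)]
  have hbot : Tendsto G atBot (𝓝 0) := by
    have := tendsto_cdf_atBot ν
    exact this.congr (fun x => (hGcdf x).symm)
  have htop : Tendsto G atTop (𝓝 1) := by
    have := tendsto_cdf_atTop ν
    exact this.congr (fun x => (hGcdf x).symm)
  have hsurj : ∀ u ∈ Ioo (0:ℝ) 1, ∃ x, G x = u := by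
    intro u hu
    obtain ⟨a, ha⟩ := (hbot.eventually (gt_mem_nhds hu.1)).exists
    obtain ⟨b, hb⟩ := (htop.eventually (lt_mem_nhds hu.2)).exists
    have hab : a ≤ b := le_of_lt (hGm.lt_iff_lt.mp (lt_trans ha hb))
    obtain ⟨x, _, hx⟩ := intermediate_value_Icc hab hGc.continuousOn
      (⟨le_of_lt ha, le_of_lt hb⟩ : u ∈ Icc (G a) (G b))
    exact ⟨x, hx⟩
  have hIPM : IsProbabilityMeasure (volume.restrict (Set.Ioo (0:ℝ) 1)) := by
    constructor
    rw [Measure.restrict_apply_univ, Real.volume_Ioo]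
    simp
  have hmeas : Measurable fun ω => G (W ω) := hGc.measurable.comp hW
  have hPM2 : IsProbabilityMeasure (μ.map (fun ω => G (W ω))) :=
    Measure.isProbabilityMeasure_map hmeas.aemeasurable
  refine Measure.ext_of_Iic _ _ (fun u => ?_)
  rw [Measure.map_apply hmeas measurableSet_Iic,
    Measure.restrict_apply measurableSet_Iic]
  rcases le_or_gt u 0 with hu | hu
  · have h1 : (fun ω => G (W ω)) ⁻¹' (Iic u) = ∅ := by
      ext ω
      simp only [mem_preimage, mem_Iic, mem_empty_iff_false, iff_false, not_le]
      exact lt_of_le_of_lt hu (aux_F_pos μ W G hGdef hGm (W ω))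
    have h2 : Iic u ∩ Ioo (0:ℝ) 1 = ∅ := by
      ext x
      simp only [mem_inter_iff, mem_Iic, mem_Ioo, mem_empty_iff_false, iff_false]
      rintro ⟨h3, h4, -⟩; linarith
    rw [h1, h2]; simp
  rcases lt_or_ge u 1 with hu1 | hu1
  · obtain ⟨x, hx⟩ := hsurj u ⟨hu, hu1⟩
    have h1 : (fun ω => G (W ω)) ⁻¹' (Iic u) = {ω | W ω ≤ x} := by
      ext ω
      simp only [mem_preimage, mem_Iic, mem_setOf_eq, ← hx]
      exact hGm.le_iff_le
    have h2 : Iic u ∩ Ioo (0:ℝ) 1 = Ioc 0 u := by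
      ext y
      simp only [mem_inter_iff, mem_Iic, mem_Ioo, mem_Ioc]
      constructor
      · rintro ⟨h3, h4, h5⟩; exact ⟨h4, h3⟩
      · rintro ⟨h3, h4⟩; exact ⟨h4, h3, lt_of_le_of_lt h4 hu1⟩
    rw [h1, h2, Real.volume_Ioc]
    have := hGIic x
    rw [hν, Measure.map_apply hW measurableSet_Iic] at this
    have hpre : W ⁻¹' (Iic x) = {ω | W ω ≤ x} := rfl
    rw [hpre] at this
    rw [this, hx]
    norm_num
  · have h1 : (fun ω => G (W ω)) ⁻¹' (Iic u) = Set.univ := by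
      ext ω
      simp only [mem_preimage, mem_Iic, mem_univ, iff_true]
      exact le_trans (le_of_lt (aux_F_lt_one μ W G hGdef hGm (W ω))) hu1
    have h2 : Iic u ∩ Ioo (0:ℝ) 1 = Ioo 0 1 := by
      rw [inter_eq_right]
      intro y hy
      exact le_trans (le_of_lt hy.2) hu1
    rw [h1, h2, Real.volume_Ioo, measure_univ]
    norm_num


lemma aux_map_pi {Ω : Type*} [MeasurableSpace Ω] (μ : Measure Ω) [IsProbabilityMeasure μ]
    {K : ℕ} (X : Fin K → Ω → ℝ) (hX : ∀ i, Measurable (X i))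
    (hindep : iIndepFun X μ) :
    μ.map (fun ω i => X i ω) = Measure.pi (fun i => μ.map (X i)) := by
  have hmeas : Measurable (fun ω i => X i ω) := measurable_pi_lambda _ hX
  haveI : ∀ i, IsProbabilityMeasure (μ.map (X i)) :=
    fun i => Measure.isProbabilityMeasure_map (hX i).aemeasurable
  refine (Measure.pi_eq (fun s hs => ?_)).symm
  rw [Measure.map_apply hmeas (MeasurableSet.univ_pi hs)]
  have hpre : (fun ω i => X i ω) ⁻¹' (Set.pi univ s) = ⋂ i, X i ⁻¹' s i := by
    ext ω; simp [Set.mem_pi]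
  rw [hpre]
  have := hindep.meas_iInter (s := fun i => X i ⁻¹' s i)
    (fun i => ⟨s i, hs i, rfl⟩)
  rw [this]
  exact Finset.prod_congr rfl (fun i _ => (Measure.map_apply (hX i) (hs i)).symm)


lemma aux_pi_compute (n : ℕ) (k : Fin (n + 1)) (c : ℝ) (hc : c ∈ Ioo (0:ℝ) 1) :
    Measure.pi (fun _ : Fin (n + 1) => volume.restrict (Ioo (0:ℝ) 1))
      {z | z k ≤ c ∧ ∀ j ≠ k, z j < z k} =
    ENNReal.ofReal (c ^ (n + 1) / (n + 1)) := by
  set η : Measure ℝ := volume.restrict (Ioo (0:ℝ) 1) with hη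
  set S : Set (ℝ × (Fin n → ℝ)) := {p | p.1 ≤ c ∧ ∀ i, p.2 i < p.1} with hS
  have hSmeas : MeasurableSet S := by
    have hSeq : S = {p : ℝ × (Fin n → ℝ) | p.1 ≤ c} ∩ ⋂ i, {p | p.2 i < p.1} := by
      ext p; simp [hS]
    rw [hSeq]
    exact (measurableSet_le measurable_fst measurable_const).inter
      (MeasurableSet.iInter fun i =>
        measurableSet_lt (measurable_snd.eval) measurable_fst)
  have hmp := measurePreserving_piFinSuccAbove (fun _ : Fin (n + 1) => η) k
  have hBS : {z : Fin (n + 1) → ℝ | z k ≤ c ∧ ∀ j ≠ k, z j < z k} =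
      (MeasurableEquiv.piFinSuccAbove (fun _ => ℝ) k) ⁻¹' S := by
    ext z
    simp only [mem_setOf_eq, mem_preimage, MeasurableEquiv.piFinSuccAbove_apply, hS]
    constructor
    · rintro ⟨h1, h2⟩
      exact ⟨h1, fun i => h2 _ (Fin.succAbove_ne k i)⟩
    · rintro ⟨h1, h2⟩
      refine ⟨h1, fun j hj => ?_⟩
      obtain ⟨i, rfl⟩ := Fin.exists_succAbove_eq hj
      exact h2 i
  rw [hBS, hmp.measure_preimage hSmeas.nullMeasurableSet]
  rw [Measure.prod_apply hSmeas]
  have hslice : ∀ x : ℝ, (Prod.mk x ⁻¹' S) =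
      if x ≤ c then (Set.pi univ fun _ : Fin n => Iio x) else (∅ : Set (Fin n → ℝ)) := by
    intro x
    by_cases hx : x ≤ c
    · simp only [hx, if_true]
      ext y; simp [hS, hx, Set.mem_pi]
    · simp only [hx, if_false]
      ext y; simp [hS, hx]
  have hint : ∀ x : ℝ, Measure.pi (fun _ : Fin n => η) (Prod.mk x ⁻¹' S) =
      Set.indicator (Iic c) (fun x => (η (Iio x)) ^ n) x := by
    intro x
    rw [hslice x]
    by_cases hx : x ≤ c
    · rw [if_pos hx, Set.indicator_of_mem (show x ∈ Iic c from hx), Measure.pi_pi]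
      simp [Finset.prod_const]
    · rw [if_neg hx, Set.indicator_of_notMem (show x ∉ Iic c from hx)]
      simp
  rw [lintegral_congr hint, lintegral_indicator measurableSet_Iic _]
  have hrr : η.restrict (Iic c) = volume.restrict (Ioc (0:ℝ) c) := by
    rw [hη, Measure.restrict_restrict measurableSet_Iic]
    congr 1
    ext x
    simp only [mem_inter_iff, mem_Iic, mem_Ioo, mem_Ioc]
    constructor
    · rintro ⟨h1, h2, h3⟩; exact ⟨h2, h1⟩
    · rintro ⟨h1, h2⟩; exact ⟨h2, h1, lt_of_le_of_lt h2 hc.2⟩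
  rw [hrr]
  have hcongr : ∫⁻ x in Ioc (0:ℝ) c, (η (Iio x)) ^ n =
      ∫⁻ x in Ioc (0:ℝ) c, ENNReal.ofReal (x ^ n) := by
    refine setLIntegral_congr_fun measurableSet_Ioc (fun x hx => ?_)
    have hIio : Iio x ∩ Ioo (0:ℝ) 1 = Ioo 0 x := by
      ext y
      simp only [mem_inter_iff, mem_Iio, mem_Ioo]
      constructor
      · rintro ⟨h1, h2, h3⟩; exact ⟨h2, h1⟩
      · rintro ⟨h1, h2⟩; exact ⟨h2, h1, lt_trans h2 (lt_of_le_of_lt hx.2 hc.2)⟩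
    rw [hη, Measure.restrict_apply measurableSet_Iio, hIio, Real.volume_Ioo, sub_zero,
      ← ENNReal.ofReal_pow (le_of_lt hx.1)]
  rw [hcongr]
  have hpow : ∫⁻ x in Ioc (0:ℝ) c, ENNReal.ofReal (x ^ n) =
      ENNReal.ofReal (∫ x in Ioc (0:ℝ) c, x ^ n) := by
    rw [← ofReal_integral_eq_lintegral_ofReal]
    · exact (continuous_pow n).integrableOn_Ioc
    · exact (ae_restrict_iff' measurableSet_Ioc).mpr
        (Filter.Eventually.of_forall fun x hx => pow_nonneg (le_of_lt hx.1) n)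
  rw [hpow, ← intervalIntegral.integral_of_le (le_of_lt hc.1), integral_pow]
  norm_num

end Aux

/-- Conditioned on user `k` being selected by CDF-based scheduling, its SINR has CDF
`(F_k)^K`: namely `P(Z_k ≤ t, k* = k) = (1/K)(F_k(t))^K`. -/
theorem cdf_scheduling_selected_cdf
    {Ω : Type*} [MeasurableSpace Ω] (μ : Measure Ω) [IsProbabilityMeasure μ]
    (K : ℕ) (hK : 1 ≤ K) (Z : Fin K → Ω → ℝ) (hZ : ∀ k, Measurable (Z k))
    (hindep : iIndepFun Z μ)
    (F : Fin K → ℝ → ℝ)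
    (hFdef : ∀ k, ∀ x : ℝ, F k x = (μ {ω | Z k ω ≤ x}).toReal)
    (hFcont : ∀ k, Continuous (F k)) (hFmono : ∀ k, StrictMono (F k)) :
    ∀ (k : Fin K) (t : ℝ),
      μ {ω | Z k ω ≤ t ∧ ∀ j : Fin K, j ≠ k → F j (Z j ω) < F k (Z k ω)} =
        ENNReal.ofReal ((1 / (K : ℝ)) * (F k t) ^ K) := by
  obtain ⟨n, rfl⟩ : ∃ n, K = n + 1 := ⟨K - 1, (Nat.succ_pred_eq_of_pos hK).symm⟩
  intro k t
  set c : ℝ := F k t with hcdef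
  have hc : c ∈ Set.Ioo (0:ℝ) 1 :=
    ⟨aux_F_pos μ (Z k) (F k) (hFdef k) (hFmono k) t,
     aux_F_lt_one μ (Z k) (F k) (hFdef k) (hFmono k) t⟩
  have hXmeas : ∀ j, Measurable (fun ω => F j (Z j ω)) :=
    fun j => ((hFcont j).measurable).comp (hZ j)
  have hXindep : iIndepFun (fun j ω => F j (Z j ω)) μ :=
    hindep.comp F (fun j => (hFcont j).measurable)
  set B : Set (Fin (n + 1) → ℝ) := {z | z k ≤ c ∧ ∀ j ≠ k, z j < z k} with hBdef
  have hBmeas : MeasurableSet B := by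
    have hBeq : B = {z : Fin (n + 1) → ℝ | z k ≤ c} ∩
        ⋂ j, ⋂ _ : j ≠ k, {z | z j < z k} := by
      ext z; simp [hBdef]
    rw [hBeq]
    exact (measurableSet_le (measurable_pi_apply k) measurable_const).inter
      (MeasurableSet.iInter fun j => MeasurableSet.iInter fun _ =>
        measurableSet_lt (measurable_pi_apply j) (measurable_pi_apply k))
  have hset : {ω | Z k ω ≤ t ∧ ∀ j : Fin (n + 1), j ≠ k → F j (Z j ω) < F k (Z k ω)} =
      (fun ω j => F j (Z j ω)) ⁻¹' B := by
    ext ω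
    simp only [Set.mem_setOf_eq, Set.mem_preimage, hBdef]
    rw [← (hFmono k).le_iff_le (a := Z k ω) (b := t)]
  have hmeas : Measurable (fun ω j => F j (Z j ω)) := measurable_pi_lambda _ hXmeas
  rw [hset, ← Measure.map_apply hmeas hBmeas,
    aux_map_pi μ (fun j ω => F j (Z j ω)) hXmeas hXindep]
  have hlaws : (fun j : Fin (n + 1) => μ.map (fun ω => F j (Z j ω))) =
      fun _ => volume.restrict (Set.Ioo (0:ℝ) 1) :=
    funext fun j => aux_uniform_law μ (Z j) (hZ j) (F j) (hFdef j) (hFcont j) (hFmono j)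
  rw [hlaws, hBdef, aux_pi_compute n k c hc]
  congr 1
  push_cast
  ring
end

section
/- With the definition J(ε) = ∫_0^∞ log₂(1+x) d(F_Z(x))^ε for F_Z(x) = 1 - e^{-(M/ρ)x}(1+x)^{-(M-1)}, one has the closed form J(ε) = (ε/ln 2)·Σ_{i=0}^{ε-1} C(ε-1, i)·((-1)^i/(i+1))·I(M(i+1)/ρ, (M-1)(i+1)+1), where I(α,β) = ∫_0^∞ e^{-αx}(1+x)^{-β} dx. -/
open MeasureTheory Finset Real Filter Set
open scoped Topology


lemma hasDerivAt_H (b : ℝ) (k : ℕ) (x : ℝ) (hx : 0 < 1 + x) :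
    HasDerivAt (fun y : ℝ => Real.exp (-b * y) / (1 + y) ^ k)
      (-(Real.exp (-b * x) * (b * (1 + x) + k)) / (1 + x) ^ (k + 1)) x := by
  have h1 : HasDerivAt (fun y : ℝ => Real.exp (-b * y)) (-b * Real.exp (-b * x)) x := by
    simpa [mul_comm] using ((hasDerivAt_id x).const_mul (-b)).exp
  have h2 : HasDerivAt (fun y : ℝ => (1 + y) ^ k) ((k : ℝ) * (1 + x) ^ (k - 1) * 1) x :=
    ((hasDerivAt_id x).const_add 1).pow k
  have hne : (1 + x) ^ k ≠ 0 := pow_ne_zero _ hx.ne'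
  have := h1.div h2 hne
  refine this.congr_deriv ?_
  rcases k with _ | k
  · field_simp; ring
  · have h3 : (1 + x) ^ (k + 1 - 1) = (1 + x) ^ k := by norm_num
    rw [h3]
    field_simp
    ring

lemma tendsto_mul_exp_neg {b : ℝ} (hb : 0 < b) :
    Tendsto (fun x : ℝ => x * Real.exp (-b * x)) atTop (𝓝 0) := by
  have h1 : Tendsto (fun t : ℝ => t * Real.exp (-t)) atTop (𝓝 0) := by
    simpa using tendsto_pow_mul_exp_neg_atTop_nhds_zero 1
  have h2 : Tendsto (fun x : ℝ => b * x) atTop atTop :=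
    tendsto_id.const_mul_atTop hb
  have h3 := (h1.comp h2).const_mul (1 / b)
  rw [mul_zero] at h3
  convert h3 using 2 with x
  field_simp
  simp only [Function.comp_apply]
  ring_nf

lemma mul_exp_neg_le {b : ℝ} (hb : 0 < b) {x : ℝ} (hx : 0 ≤ x) :
    x * Real.exp (-b * x) ≤ (2 / b) * Real.exp (-(b / 2) * x) := by
  have key : (b / 2 * x) * Real.exp (-(b / 2 * x)) ≤ 1 := by
    have h1 : b / 2 * x ≤ Real.exp (b / 2 * x) :=
      le_trans (by linarith) (Real.add_one_le_exp _)
    rw [Real.exp_neg]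
    rw [mul_inv_le_iff₀ (Real.exp_pos _), one_mul]
    exact h1
  have hx2 : x * Real.exp (-b * x)
      = (2 / b) * (((b / 2 * x) * Real.exp (-(b / 2 * x))) * Real.exp (-(b / 2) * x)) := by
    rw [show (-b * x) = (-(b / 2 * x)) + (-(b / 2) * x) by ring, Real.exp_add]
    field_simp
  rw [hx2]
  calc (2 / b) * (((b / 2 * x) * Real.exp (-(b / 2 * x))) * Real.exp (-(b / 2) * x))
      ≤ (2 / b) * (1 * Real.exp (-(b / 2) * x)) := by
        apply mul_le_mul_of_nonneg_left _ (by positivity)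
        exact mul_le_mul_of_nonneg_right key (Real.exp_pos _).le
    _ = (2 / b) * Real.exp (-(b / 2) * x) := by ring

lemma logb_le_aux {x : ℝ} (hx : 0 ≤ x) : Real.logb 2 (1 + x) ≤ x / Real.log 2 := by
  rw [Real.logb]
  have h1 : Real.log (1 + x) ≤ x := by
    have := Real.log_le_sub_one_of_pos (show (0:ℝ) < 1 + x by linarith)
    linarith
  exact (div_le_div_iff_of_pos_right (Real.log_pos one_lt_two)).mpr h1

lemma H_integrable {b : ℝ} (hb : 0 < b) (k : ℕ) :
    IntegrableOn (fun x : ℝ => Real.exp (-b * x) / (1 + x) ^ k) (Ioi 0) := by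
  apply (exp_neg_integrableOn_Ioi 0 hb).mono'
  · apply ContinuousOn.aestronglyMeasurable _ measurableSet_Ioi
    apply ContinuousOn.div (by fun_prop) (by fun_prop)
    intro x hx
    have hx' : (0:ℝ) < x := hx
    exact pow_ne_zero _ (by positivity)
  · filter_upwards [ae_restrict_mem measurableSet_Ioi] with x hx
    have hx' : (0:ℝ) < x := hx
    have h1 : (0:ℝ) < 1 + x := by linarith
    rw [Real.norm_eq_abs, abs_of_nonneg (by positivity)]
    exact div_le_self (Real.exp_pos _).le (one_le_pow₀ (by linarith))

lemma continuousOn_logb : ContinuousOn (fun x : ℝ => Real.logb 2 (1 + x)) (Ici 0) := by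
  have : ContinuousOn (fun x : ℝ => Real.log (1 + x)) (Ici 0) := by
    apply ContinuousOn.log (by fun_prop)
    intro x hx
    have hx' : (0:ℝ) ≤ x := hx
    positivity
  simpa [Real.logb] using this.div_const (Real.log 2)

lemma quot_le {b : ℝ} (hb : 0 < b) (k : ℕ) {x : ℝ} (hx : 0 ≤ x) :
    (b * (1 + x) + k) / (1 + x) ^ (k + 1) ≤ b + k := by
  have h1 : (0:ℝ) < 1 + x := by linarith
  rw [div_le_iff₀ (by positivity)]
  have h2 : (1 + x : ℝ) ≤ (1 + x) ^ (k + 1) := le_self_pow₀ (by linarith) (Nat.succ_ne_zero k)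
  have hk : (0:ℝ) ≤ (k:ℝ) := Nat.cast_nonneg k
  nlinarith [mul_le_mul_of_nonneg_left h2 (show (0:ℝ) ≤ b + k by positivity)]

lemma logb_nonneg_aux {x : ℝ} (hx : 0 ≤ x) : 0 ≤ Real.logb 2 (1 + x) :=
  Real.logb_nonneg one_lt_two (by linarith)

lemma u_integrable {b : ℝ} (hb : 0 < b) (k : ℕ) :
    IntegrableOn (fun x : ℝ => Real.logb 2 (1 + x) *
      (-(Real.exp (-b * x) * (b * (1 + x) + k)) / (1 + x) ^ (k + 1))) (Ioi 0) := by
  apply ((exp_neg_integrableOn_Ioi 0 (half_pos hb)).const_mul ((b + k) / Real.log 2 * (2 / b))).mono'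
  · apply ContinuousOn.aestronglyMeasurable _ measurableSet_Ioi
    apply ContinuousOn.mul ((_root_.continuousOn_logb).mono (Ioi_subset_Ici le_rfl))
    apply ContinuousOn.div (by fun_prop) (by fun_prop)
    intro x hx
    have hx' : (0:ℝ) < x := hx
    exact pow_ne_zero _ (by positivity)
  · filter_upwards [ae_restrict_mem measurableSet_Ioi] with x hx
    have hx' : (0:ℝ) < x := hx
    have h1 : (0:ℝ) < 1 + x := by linarith
    have hlogb := logb_nonneg_aux hx'.le
    have hE := (Real.exp_pos (-b * x)).le
    rw [Real.norm_eq_abs]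
    have habs : |Real.logb 2 (1 + x) * (-(Real.exp (-b * x) * (b * (1 + x) + k)) / (1 + x) ^ (k + 1))|
        = Real.logb 2 (1 + x) * (Real.exp (-b * x) * ((b * (1 + x) + k) / (1 + x) ^ (k + 1))) := by
      rw [abs_mul, abs_of_nonneg hlogb]
      rw [abs_div, abs_neg, abs_of_nonneg (by positivity), abs_of_nonneg (by positivity)]
      ring
    rw [habs]
    calc Real.logb 2 (1 + x) * (Real.exp (-b * x) * ((b * (1 + x) + k) / (1 + x) ^ (k + 1)))
        ≤ (x / Real.log 2) * (Real.exp (-b * x) * (b + k)) := by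
          apply mul_le_mul (logb_le_aux hx'.le) ?_ (by positivity) (by positivity)
          exact mul_le_mul_of_nonneg_left (quot_le hb k hx'.le) hE
      _ = ((b + k) / Real.log 2) * (x * Real.exp (-b * x)) := by ring
      _ ≤ ((b + k) / Real.log 2) * ((2 / b) * Real.exp (-(b / 2) * x)) := by
          apply mul_le_mul_of_nonneg_left (mul_exp_neg_le hb hx'.le)
          have := Real.log_pos one_lt_two
          positivity
      _ = (b + k) / Real.log 2 * (2 / b) * Real.exp (-(b / 2) * x) := by ring

lemma tendsto_u {b : ℝ} (hb : 0 < b) (k : ℕ) :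
    Tendsto (fun x : ℝ => Real.logb 2 (1 + x) * (Real.exp (-b * x) / (1 + x) ^ k))
      atTop (𝓝 0) := by
  have hlim : Tendsto (fun x : ℝ => (1 / Real.log 2) * (x * Real.exp (-b * x))) atTop (𝓝 0) := by
    simpa using (tendsto_mul_exp_neg hb).const_mul (1 / Real.log 2)
  apply squeeze_zero' ?_ ?_ hlim
  · filter_upwards [eventually_ge_atTop (0:ℝ)] with x hx
    have h1 : (0:ℝ) < 1 + x := by linarith
    have := logb_nonneg_aux hx
    positivity
  · filter_upwards [eventually_ge_atTop (0:ℝ)] with x hx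
    have h1 : (0:ℝ) < 1 + x := by linarith
    calc Real.logb 2 (1 + x) * (Real.exp (-b * x) / (1 + x) ^ k)
        ≤ (x / Real.log 2) * Real.exp (-b * x) := by
          apply mul_le_mul (logb_le_aux hx) ?_ (by positivity) ?_
          · exact div_le_self (Real.exp_pos _).le (one_le_pow₀ (by linarith))
          · have := Real.log_pos one_lt_two
            positivity
      _ = (1 / Real.log 2) * (x * Real.exp (-b * x)) := by ring

lemma hasDerivAt_logb_aux {x : ℝ} (hx : 0 < 1 + x) :
    HasDerivAt (fun y : ℝ => Real.logb 2 (1 + y)) (1 / ((1 + x) * Real.log 2)) x := by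
  have h1 : HasDerivAt (fun y : ℝ => Real.log (1 + y)) (1 / (1 + x)) x := by
    simpa using (((hasDerivAt_id x).const_add 1).log hx.ne')
  have := h1.div_const (Real.log 2)
  simp only [Real.logb]
  refine this.congr_deriv ?_
  field_simp

lemma key_integral {b : ℝ} (hb : 0 < b) (k : ℕ) :
    ∫ x in Ioi (0:ℝ), Real.logb 2 (1 + x) *
        (-(Real.exp (-b * x) * (b * (1 + x) + k)) / (1 + x) ^ (k + 1))
      = -(1 / Real.log 2) * ∫ x in Ioi (0:ℝ), Real.exp (-b * x) / (1 + x) ^ (k + 1) := by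
  set A : ℝ → ℝ := fun x => 1 / ((1 + x) * Real.log 2) * (Real.exp (-b * x) / (1 + x) ^ k) with hA
  set B : ℝ → ℝ := fun x => Real.logb 2 (1 + x) *
      (-(Real.exp (-b * x) * (b * (1 + x) + k)) / (1 + x) ^ (k + 1)) with hB
  have hAeq : ∀ x ∈ Ioi (0:ℝ), A x = (1 / Real.log 2) * (Real.exp (-b * x) / (1 + x) ^ (k + 1)) := by
    intro x hx
    have hx' : (0:ℝ) < x := hx
    have h1 : (0:ℝ) < 1 + x := by linarith
    have hl2 := Real.log_pos one_lt_two
    simp only [hA]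
    rw [pow_succ]
    field_simp
  have hAint : IntegrableOn A (Ioi 0) := by
    apply IntegrableOn.congr_fun ((H_integrable hb (k + 1)).const_mul (1 / Real.log 2)) _
      measurableSet_Ioi
    intro x hx
    exact (hAeq x hx).symm
  have hBint : IntegrableOn B (Ioi 0) := u_integrable hb k
  have hderiv : ∀ x ∈ Ioi (0:ℝ), HasDerivAt
      (fun y : ℝ => Real.logb 2 (1 + y) * (Real.exp (-b * y) / (1 + y) ^ k)) (A x + B x) x := by
    intro x hx
    have hx' : (0:ℝ) < x := hx
    have h1 : (0:ℝ) < 1 + x := by linarith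
    have := (hasDerivAt_logb_aux h1).mul (hasDerivAt_H b k x h1)
    refine this.congr_deriv ?_
    all_goals simp only [hA, hB]
  have hcont : ContinuousWithinAt
      (fun y : ℝ => Real.logb 2 (1 + y) * (Real.exp (-b * y) / (1 + y) ^ k)) (Ici 0) 0 := by
    apply ContinuousWithinAt.mul (_root_.continuousOn_logb 0 (by simp))
    exact ContinuousWithinAt.div (Continuous.continuousWithinAt (by fun_prop))
      (Continuous.continuousWithinAt (by fun_prop)) (by norm_num)
  have hFTC := integral_Ioi_of_hasDerivAt_of_tendsto hcont hderiv (hAint.add hBint)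
    (tendsto_u hb k)
  simp only [Real.logb_one, zero_mul, sub_zero, neg_zero, mul_zero, zero_sub, add_zero,
    zero_add] at hFTC
  rw [integral_add hAint hBint] at hFTC
  have hzero := hFTC
  have hAval : (∫ x in Ioi (0:ℝ), A x)
      = (1 / Real.log 2) * ∫ x in Ioi (0:ℝ), Real.exp (-b * x) / (1 + x) ^ (k + 1) := by
    rw [setIntegral_congr_fun measurableSet_Ioi hAeq, MeasureTheory.integral_const_mul]
  rw [neg_mul]
  linarith

lemma pow_mul_deriv (a x : ℝ) (h1 : 0 < 1 + x) (m i : ℕ) :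
    (Real.exp (-a * x) / (1 + x) ^ m) ^ i *
        (Real.exp (-a * x) * (a * (1 + x) + m) / (1 + x) ^ (m + 1))
      = (1 / ((i : ℝ) + 1)) *
        (Real.exp (-(a * ((i : ℝ) + 1)) * x) *
            ((a * ((i : ℝ) + 1)) * (1 + x) + ((m * (i + 1) : ℕ) : ℝ)) /
          (1 + x) ^ (m * (i + 1) + 1)) := by
  have hE : Real.exp (-(a * ((i : ℝ) + 1)) * x) = Real.exp (-a * x) ^ (i + 1) := by
    rw [← Real.exp_nat_mul]
    congr 1
    push_cast
    ring
  have hi : ((i : ℝ) + 1) ≠ 0 := by positivity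
  have hx0 : (1 + x) ≠ 0 := h1.ne'
  rw [hE, div_pow, ← pow_mul]
  push_cast
  field_simp
  ring

/-- Closed form of `J(ε) = ∫_0^∞ log₂(1+x) d(F_Z(x))^ε` for the SINR CDF
`F_Z(x) = 1 - e^{-(M/ρ)x}(1+x)^{-(M-1)}`, in terms of
`I(α,β) = ∫_0^∞ e^{-αx}(1+x)^{-β} dx`. -/
theorem J_closed_form (M : ℕ) (hM : 1 ≤ M) (ρ : ℝ) (hρ : 0 < ρ) (ε : ℕ) (hε : 1 ≤ ε) :
    (∫ x in Set.Ioi (0 : ℝ), Real.logb 2 (1 + x) *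
        deriv (fun y => (1 - Real.exp (-((M : ℝ) / ρ) * y) / (1 + y) ^ (M - 1)) ^ ε) x) =
      ((ε : ℝ) / Real.log 2) * ∑ i ∈ Finset.range ε,
        ((ε - 1).choose i : ℝ) * ((-1 : ℝ) ^ i / (i + 1)) *
          ∫ x in Set.Ioi (0 : ℝ),
            Real.exp (-((M : ℝ) * (i + 1) / ρ) * x) / (1 + x) ^ ((M - 1) * (i + 1) + 1) := by
  set a : ℝ := (M : ℝ) / ρ with ha
  set m : ℕ := M - 1 with hm
  have haPos : 0 < a := by
    rw [ha]
    have : (0:ℝ) < M := by exact_mod_cast Nat.lt_of_lt_of_le Nat.zero_lt_one hM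
    positivity
  -- coefficients
  set c : ℕ → ℝ := fun i => (ε : ℝ) * ((ε - 1).choose i : ℝ) * (-1) ^ (i + 1) / ((i : ℝ) + 1)
    with hc
  set g : ℕ → ℝ → ℝ := fun i x => Real.logb 2 (1 + x) *
      (-(Real.exp (-(a * ((i : ℝ) + 1)) * x) *
          ((a * ((i : ℝ) + 1)) * (1 + x) + ((m * (i + 1) : ℕ) : ℝ))) /
        (1 + x) ^ (m * (i + 1) + 1)) with hg
  have hbPos : ∀ i : ℕ, 0 < a * ((i : ℝ) + 1) := fun i => by positivity
  -- Step 1: pointwise rewrite of the integrand on Ioi 0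
  have hEq : EqOn (fun x => Real.logb 2 (1 + x) *
        deriv (fun y => (1 - Real.exp (-a * y) / (1 + y) ^ m) ^ ε) x)
      (fun x => ∑ i ∈ Finset.range ε, c i * g i x) (Ioi 0) := by
    intro x hx
    have hx' : (0:ℝ) < x := hx
    have h1 : (0:ℝ) < 1 + x := by linarith
    have hH := hasDerivAt_H a m x h1
    have hF := hH.const_sub 1
    have hFe := hF.pow ε
    have hderiv := hFe.deriv
    simp only
    rw [show deriv (fun y => (1 - Real.exp (-a * y) / (1 + y) ^ m) ^ ε) x = _ from hderiv]
    -- binomial expansion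
    have hbin : (1 - Real.exp (-a * x) / (1 + x) ^ m) ^ (ε - 1)
        = ∑ i ∈ Finset.range ε,
            (-1 : ℝ) ^ i * (Real.exp (-a * x) / (1 + x) ^ m) ^ i * ((ε - 1).choose i : ℝ) := by
      have h := add_pow (-(Real.exp (-a * x) / (1 + x) ^ m)) 1 (ε - 1)
      rw [show ε - 1 + 1 = ε from Nat.succ_pred_eq_of_pos hε] at h
      rw [show (1 - Real.exp (-a * x) / (1 + x) ^ m)
          = (-(Real.exp (-a * x) / (1 + x) ^ m) + 1) by ring, h]
      refine Finset.sum_congr rfl fun i _ => ?_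
      rw [neg_pow]
      simp
    rw [hbin, Finset.mul_sum, Finset.sum_mul, Finset.mul_sum]
    refine Finset.sum_congr rfl fun i _ => ?_
    have hid := pow_mul_deriv a x h1 m i
    simp only [hg, hc]
    linear_combination (Real.logb 2 (1 + x) * (ε : ℝ) * (((ε - 1).choose i : ℕ) : ℝ) * (-1) ^ i) * hid
  rw [setIntegral_congr_fun measurableSet_Ioi hEq]
  have hint : ∀ i ∈ Finset.range ε, IntegrableOn (fun x => c i * g i x) (Ioi 0) := by
    intro i _
    simp only [hg]
    exact (u_integrable (hbPos i) (m * (i + 1))).const_mul (c i)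
  rw [MeasureTheory.integral_finset_sum _ hint]
  rw [Finset.mul_sum]
  refine Finset.sum_congr rfl fun i _ => ?_
  have hexp : ∀ x : ℝ, -((M : ℝ) * ((i : ℝ) + 1) / ρ) * x = -(a * ((i : ℝ) + 1)) * x := by
    intro x; rw [ha]; ring
  simp only [hexp]
  have hkey := key_integral (hbPos i) (m * (i + 1))
  have hmul : (∫ x in Ioi (0:ℝ), c i * g i x) = c i * ∫ x in Ioi (0:ℝ), g i x :=
    MeasureTheory.integral_const_mul (c i) _
  rw [hmul]
  simp only [hg]
  rw [hkey]
  simp only [hc]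
  push_cast
  ring
end

section
/- Let ξ₁(N, L, ℓ) = Σ_{i=ℓ}^{L-1} ((L-i)/L)·C(N, i)·C(i, ℓ)·(-1)^{i-ℓ}. Then Σ_{ℓ=0}^{L-1} ξ₁(N, L, ℓ) = 1 for all integers 1 ≤ L ≤ N. -/
open Finset

/-- The best-L selective feedback coefficients
`ξ₁(N,L,ℓ) = Σ_{i=ℓ}^{L-1} ((L-i)/L) C(N,i) C(i,ℓ) (-1)^{i-ℓ}` sum to one. -/
theorem xi1_sum_eq_one (N L : ℕ) (hL : 1 ≤ L) (hLN : L ≤ N) :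
    ∑ l ∈ Finset.range L,
      (∑ i ∈ Finset.Icc l (L - 1),
        (((L : ℝ) - i) / L) * (N.choose i : ℝ) * (i.choose l : ℝ) * (-1 : ℝ) ^ (i - l)) = 1 := by
  have hL0 : (L : ℝ) ≠ 0 := by positivity
  rw [Finset.sum_comm' (t' := Finset.range L) (s' := fun i => Finset.range (i+1))
    (by intro l i; simp only [Finset.mem_range, Finset.mem_Icc]; omega)]
  have h1 : ∀ i ∈ Finset.range L,
      (∑ l ∈ Finset.range (i+1),
        (((L : ℝ) - i) / L) * (N.choose i : ℝ) * (i.choose l : ℝ) * (-1 : ℝ) ^ (i - l))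
      = if i = 0 then 1 else 0 := by
    intro i hi
    have hbin : ∑ l ∈ Finset.range (i+1), (i.choose l : ℝ) * (-1 : ℝ) ^ (i - l)
        = if i = 0 then 1 else 0 := by
      have h := add_pow (1 : ℝ) (-1) i
      simp only [one_pow, one_mul, add_neg_cancel] at h
      rw [eq_comm] at h
      calc ∑ l ∈ Finset.range (i+1), (i.choose l : ℝ) * (-1 : ℝ) ^ (i - l)
          = ∑ l ∈ Finset.range (i+1), (-1 : ℝ) ^ (i - l) * (i.choose l : ℝ) := by
            exact Finset.sum_congr rfl fun l _ => mul_comm _ _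
        _ = (0:ℝ) ^ i := h
        _ = if i = 0 then 1 else 0 := by
            rcases Nat.eq_zero_or_pos i with h0 | h0
            · simp [h0]
            · simp [h0.ne']
    calc (∑ l ∈ Finset.range (i+1),
        (((L : ℝ) - i) / L) * (N.choose i : ℝ) * (i.choose l : ℝ) * (-1 : ℝ) ^ (i - l))
        = (((L : ℝ) - i) / L) * (N.choose i : ℝ) *
          ∑ l ∈ Finset.range (i+1), (i.choose l : ℝ) * (-1 : ℝ) ^ (i - l) := by
          rw [Finset.mul_sum]; exact Finset.sum_congr rfl fun l _ => by ring
      _ = if i = 0 then 1 else 0 := by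
          rw [hbin]
          rcases Nat.eq_zero_or_pos i with h0 | h0
          · simp [h0, hL0]
          · simp [h0.ne']
  rw [Finset.sum_congr rfl h1]
  simp [Finset.mem_range]
  omega
end

section
/- For L = N, the coefficients ξ₁(N, N, ℓ) = Σ_{i=ℓ}^{N-1} ((N-i)/N)·C(N,i)·C(i,ℓ)·(-1)^{i-ℓ} satisfy ξ₁(N, N, N-1) = 1 and ξ₁(N, N, ℓ) = 0 for 0 ≤ ℓ ≤ N-2. -/
open Finset

lemma xi1_term_eq (N i : ℕ) (hN : 1 ≤ N) (hi : i ≤ N - 1) :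
    (((N : ℝ) - i) / N) * (N.choose i : ℝ) = ((N - 1).choose i : ℝ) := by
  have hiN : i ≤ N := le_trans hi (Nat.sub_le _ _)
  have h := Nat.choose_mul_succ_eq (N - 1) i
  rw [Nat.sub_add_cancel hN] at h
  have h' : ((N - 1).choose i : ℝ) * N = (N.choose i : ℝ) * ((N : ℝ) - i) := by
    have := congrArg (Nat.cast : ℕ → ℝ) h
    push_cast [Nat.cast_sub hiN] at this
    linarith
  have hNpos : (0 : ℝ) < N := by exact_mod_cast hN
  field_simp
  linarith
/-- For full spectral feedback `L = N`:
`ξ₁(N,N,N-1) = 1` and `ξ₁(N,N,ℓ) = 0` for `0 ≤ ℓ ≤ N-2`. -/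
theorem xi1_full_feedback (N : ℕ) (hN : 1 ≤ N) :
    (∑ i ∈ Finset.Icc (N - 1) (N - 1),
        (((N : ℝ) - i) / N) * (N.choose i : ℝ) * (i.choose (N - 1) : ℝ) * (-1 : ℝ) ^ (i - (N - 1)))
      = 1 ∧
    ∀ l : ℕ, l + 2 ≤ N →
      (∑ i ∈ Finset.Icc l (N - 1),
        (((N : ℝ) - i) / N) * (N.choose i : ℝ) * (i.choose l : ℝ) * (-1 : ℝ) ^ (i - l)) = 0 := by
  constructor
  · rw [Finset.Icc_self, Finset.sum_singleton, xi1_term_eq N (N - 1) hN le_rfl]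
    simp
  · intro l hl
    have hlN : l ≤ N - 1 := by omega
    -- rewrite terms
    have hterm : ∀ i ∈ Finset.Icc l (N - 1),
        (((N : ℝ) - i) / N) * (N.choose i : ℝ) * (i.choose l : ℝ) * (-1 : ℝ) ^ (i - l)
          = ((N - 1).choose l : ℝ) * (((N - 1 - l).choose (i - l) : ℝ) * (-1 : ℝ) ^ (i - l)) := by
      intro i hi
      rw [Finset.mem_Icc] at hi
      rw [xi1_term_eq N i hN hi.2]
      have := Nat.choose_mul (n := N - 1) hi.1
      have h' : ((N - 1).choose i : ℝ) * (i.choose l : ℝ)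
          = ((N - 1).choose l : ℝ) * ((N - 1 - l).choose (i - l) : ℝ) := by
        exact_mod_cast congrArg (Nat.cast : ℕ → ℝ) this
      rw [h', mul_assoc]
    rw [Finset.sum_congr rfl hterm, ← Finset.mul_sum]
    have hre : ∑ i ∈ Finset.Icc l (N - 1),
        (((N - 1 - l).choose (i - l) : ℝ) * (-1 : ℝ) ^ (i - l))
        = ∑ j ∈ Finset.range (N - 1 - l + 1),
            ((-1 : ℝ) ^ j * ((N - 1 - l).choose j : ℝ)) := by
      rw [Finset.sum_bij (fun i _ => i - l)]
      · intro i hi; rw [Finset.mem_Icc] at hi; rw [Finset.mem_range]; omega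
      · intro a ha b hb hab
        rw [Finset.mem_Icc] at ha hb; omega
      · intro j hj; rw [Finset.mem_range] at hj
        exact ⟨j + l, Finset.mem_Icc.mpr (by omega), by omega⟩
      · intro i hi; ring
    rw [hre]
    have hne : N - 1 - l ≠ 0 := by omega
    have := Int.alternating_sum_range_choose_of_ne hne
    have hz : ∑ j ∈ Finset.range (N - 1 - l + 1),
        ((-1 : ℝ) ^ j * ((N - 1 - l).choose j : ℝ)) = 0 := by
      exact_mod_cast congrArg (Int.cast : ℤ → ℝ) this
    rw [hz, mul_zero]
end

section
/- Let F : ℝ → [0,1] be a CDF with F(x) < 1 for all x and F(x) → 1 as x → ∞, and let coefficients c_ℓ (0 ≤ ℓ ≤ L-1) satisfy Σ_ℓ c_ℓ = 1. Define G(x) = Σ_{ℓ=0}^{L-1} c_ℓ F(x)^{N-ℓ} and s = N - Σ_{ℓ=0}^{L-1} c_ℓ·ℓ. Then lim_{x→∞} (1 - G(x))/(1 - F(x)^s) = 1, i.e., G is tail equivalent to F^s. -/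
open Filter Real Finset

/-- Tail equivalence of the best-L feedback CDF
`G = Σ_{ℓ<L} c_ℓ F^{N-ℓ}` with `F^s`, where `s = N - Σ_{ℓ<L} c_ℓ ℓ`:
`(1 - G(x))/(1 - F(x)^s) → 1` as `x → ∞`. -/
theorem best_L_tail_equivalence (N L : ℕ) (hL : 1 ≤ L) (hLN : L ≤ N)
    (F : ℝ → ℝ) (hmono : Monotone F) (hlt : ∀ x, F x < 1) (hpos : ∀ x, 0 < F x)
    (htop : Tendsto F atTop (nhds 1))
    (c : ℕ → ℝ) (hc : ∑ l ∈ Finset.range L, c l = 1)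
    (s : ℝ) (hs : s = (N : ℝ) - ∑ l ∈ Finset.range L, c l * l) (hspos : 0 < s) :
    Tendsto (fun x =>
        (1 - ∑ l ∈ Finset.range L, c l * F x ^ (N - l)) / (1 - F x ^ s))
      atTop (nhds 1) := by
  set h : ℝ → ℝ := fun t => ∑ l ∈ Finset.range L, c l * t ^ (N - l) with hh
  set g : ℝ → ℝ := fun t => t ^ s with hg
  have hF1 : Tendsto F atTop (nhdsWithin (1:ℝ) {(1:ℝ)}ᶜ) := by
    apply tendsto_nhdsWithin_of_tendsto_nhds_of_eventually_within _ htop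
    exact Eventually.of_forall fun x => (hlt x).ne
  have hd1 : HasDerivAt h s 1 := by
    have H : HasDerivAt h
        (∑ l ∈ Finset.range L, c l * (((N - l : ℕ) : ℝ) * (1:ℝ) ^ (N - l - 1))) 1 :=
      HasDerivAt.fun_sum fun l _ => (hasDerivAt_pow (N - l) 1).const_mul (c l)
    convert H using 1
    rw [hs]
    have key : ∀ l ∈ Finset.range L, c l * (((N - l : ℕ) : ℝ) * (1:ℝ) ^ (N - l - 1))
        = c l * (N : ℝ) - c l * l := by
      intro l hl
      have hlN : l ≤ N := le_trans (le_of_lt (Finset.mem_range.mp hl)) hLN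
      rw [Nat.cast_sub hlN, one_pow]
      ring
    rw [Finset.sum_congr rfl key, Finset.sum_sub_distrib, ← Finset.sum_mul, hc]
    ring
  have hd2 : HasDerivAt g s 1 := by
    have H := Real.hasDerivAt_rpow_const (x := (1:ℝ)) (p := s) (Or.inl one_ne_zero)
    simpa [Real.one_rpow] using H
  have hsl1 : Tendsto (slope h 1) (nhdsWithin (1:ℝ) {(1:ℝ)}ᶜ) (nhds s) :=
    hasDerivAt_iff_tendsto_slope.mp hd1
  have hsl2 : Tendsto (slope g 1) (nhdsWithin (1:ℝ) {(1:ℝ)}ᶜ) (nhds s) :=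
    hasDerivAt_iff_tendsto_slope.mp hd2
  have hdiv : Tendsto (fun t => slope h 1 t / slope g 1 t)
      (nhdsWithin (1:ℝ) {(1:ℝ)}ᶜ) (nhds 1) := by
    have := hsl1.div hsl2 (ne_of_gt hspos)
    rw [div_self (ne_of_gt hspos)] at this
    exact this
  have heq : ∀ t : ℝ, t ≠ 1 → slope h 1 t / slope g 1 t = (1 - h t) / (1 - g t) := by
    intro t ht
    have h1 : h 1 = 1 := by simp [hh, hc]
    have g1 : g 1 = 1 := by simp [hg, Real.one_rpow]
    have ht1 : t - 1 ≠ 0 := sub_ne_zero.mpr ht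
    rw [slope_def_field, slope_def_field, h1, g1, div_div_div_cancel_right₀ ht1,
      show (1 - h t) = -(h t - 1) by ring, show (1 - g t) = -(g t - 1) by ring,
      neg_div_neg_eq]
  have hcomp : Tendsto (fun x => slope h 1 (F x) / slope g 1 (F x)) atTop (nhds 1) :=
    hdiv.comp hF1
  refine hcomp.congr fun x => ?_
  rw [heq (F x) (hlt x).ne]
end

section
/- Let U and V be distribution functions that are tail equivalent, i.e., lim_{x→∞} (1-U(x))/(1-V(x)) = 1, and suppose there are constants a_K ∈ ℝ, b_K > 0 with U^K(a_K + b_K x) → G(x) pointwise at continuity points, G nondegenerate. Then V^K(a_K + b_K x) → G(x) at continuity points of G. -/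
open Filter

private lemma logSlope :
    Tendsto (fun y : ℝ => Real.log y / (y - 1)) (nhdsWithin 1 {(1:ℝ)}ᶜ) (nhds 1) := by
  have h := Real.hasDerivAt_log one_ne_zero
  rw [hasDerivAt_iff_tendsto_slope] at h
  simp only [inv_one] at h
  have : (slope Real.log 1) = fun y : ℝ => Real.log y / (y - 1) := by
    funext y; rw [slope_def_field]; simp
  rwa [this] at h

/-- Lemma C: if `n*(1 - v n) → t` then `v n ^ n → exp (-t)`. -/
private lemma pow_tendsto_of_lin (v : ℕ → ℝ) (h0 : ∀ n, 0 ≤ v n) (h1 : ∀ n, v n < 1)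
    (t : ℝ) (h : Tendsto (fun n : ℕ => (n:ℝ) * (1 - v n)) atTop (nhds t)) :
    Tendsto (fun n => v n ^ n) atTop (nhds (Real.exp (-t))) := by
  have hsub : Tendsto (fun n => 1 - v n) atTop (nhds 0) := by
    have h2 : Tendsto (fun n : ℕ => ((n:ℝ) * (1 - v n)) * (1 / (n:ℝ))) atTop (nhds (t * 0)) :=
      h.mul tendsto_one_div_atTop_nhds_zero_nat
    rw [mul_zero] at h2
    apply h2.congr'
    filter_upwards [eventually_ge_atTop 1] with n hn
    have : (n:ℝ) ≠ 0 := Nat.cast_ne_zero.2 (by omega)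
    field_simp
  have hv1 : Tendsto v atTop (nhds 1) := by
    have := (tendsto_const_nhds (x := (1:ℝ)) (f := atTop)).sub hsub
    simpa using this
  have hvlt : Tendsto v atTop (nhdsWithin 1 {(1:ℝ)}ᶜ) :=
    tendsto_nhdsWithin_of_tendsto_nhds_of_eventually_within _ hv1
      (Eventually.of_forall fun n => (h1 n).ne)
  have hlog : Tendsto (fun n : ℕ => (n:ℝ) * Real.log (v n)) atTop (nhds (-t)) := by
    have h2 : Tendsto (fun n : ℕ => -(((n:ℝ) * (1 - v n)) * (Real.log (v n) / (v n - 1))))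
        atTop (nhds (-(t * 1))) := (h.mul (logSlope.comp hvlt)).neg
    rw [mul_one] at h2
    apply h2.congr
    intro n
    have hne : v n - 1 ≠ 0 := sub_ne_zero.2 (h1 n).ne
    field_simp
    ring
  have hpos : ∀ᶠ n in atTop, 0 < v n := hv1.eventually_const_lt (by norm_num : (0:ℝ) < 1)
  have := (Real.continuous_exp.tendsto _).comp hlog
  apply this.congr'
  filter_upwards [hpos] with n hn
  simp only [Function.comp_apply, Real.exp_nat_mul, Real.exp_log hn]

/-- Lemma B: if `v n ^ n → L > 0` then `n*(1 - v n) → -log L`. -/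
private lemma lin_tendsto_of_pow (v : ℕ → ℝ) (h0 : ∀ n, 0 ≤ v n) (h1 : ∀ n, v n < 1)
    (L : ℝ) (hL : 0 < L) (h : Tendsto (fun n => v n ^ n) atTop (nhds L)) :
    Tendsto (fun n : ℕ => (n:ℝ) * (1 - v n)) atTop (nhds (-Real.log L)) := by
  have hlog : Tendsto (fun n : ℕ => (n:ℝ) * Real.log (v n)) atTop (nhds (Real.log L)) := by
    have := (Real.continuousAt_log hL.ne').tendsto.comp h
    apply this.congr
    intro n
    simp [Real.log_pow]
  have hlv0 : Tendsto (fun n => Real.log (v n)) atTop (nhds 0) := by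
    have h2 : Tendsto (fun n : ℕ => ((n:ℝ) * Real.log (v n)) * (1 / (n:ℝ))) atTop
        (nhds (Real.log L * 0)) := hlog.mul tendsto_one_div_atTop_nhds_zero_nat
    rw [mul_zero] at h2
    apply h2.congr'
    filter_upwards [eventually_ge_atTop 1] with n hn
    have : (n:ℝ) ≠ 0 := Nat.cast_ne_zero.2 (by omega)
    field_simp
  have hpos : ∀ᶠ n in atTop, 0 < v n := by
    have := h.eventually_const_lt (half_lt_self hL)
    filter_upwards [this, eventually_ge_atTop 1] with n hn hn1
    rcases (h0 n).lt_or_eq with h' | h'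
    · exact h'
    · rw [← h'] at hn
      rw [zero_pow (by omega : n ≠ 0)] at hn
      linarith
  have hv1 : Tendsto v atTop (nhds 1) := by
    have := (Real.continuous_exp.tendsto _).comp hlv0
    rw [Real.exp_zero] at this
    apply this.congr'
    filter_upwards [hpos] with n hn
    simp [Function.comp_apply, Real.exp_log hn]
  have hvlt : Tendsto v atTop (nhdsWithin 1 {(1:ℝ)}ᶜ) :=
    tendsto_nhdsWithin_of_tendsto_nhds_of_eventually_within _ hv1
      (Eventually.of_forall fun n => (h1 n).ne)
  have hslope : Tendsto (fun n => Real.log (v n) / (v n - 1)) atTop (nhds 1) :=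
    logSlope.comp hvlt
  have h2 : Tendsto (fun n : ℕ => -(((n:ℝ) * Real.log (v n)) * (Real.log (v n) / (v n - 1))⁻¹))
      atTop (nhds (-(Real.log L * 1⁻¹))) := (hlog.mul (hslope.inv₀ one_ne_zero)).neg
  rw [inv_one, mul_one] at h2
  apply h2.congr'
  filter_upwards [hpos] with n hn
  have hne : v n - 1 ≠ 0 := sub_ne_zero.2 (h1 n).ne
  have hlogne : Real.log (v n) ≠ 0 := by
    have := Real.log_neg hn (h1 n)
    linarith
  field_simp
  ring

/-- Lemma D: if `v n ^ n → 0` then `n*(1 - v n) → ∞`. -/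
private lemma lin_atTop_of_pow_zero (v : ℕ → ℝ) (h0 : ∀ n, 0 ≤ v n) (h1 : ∀ n, v n < 1)
    (h : Tendsto (fun n => v n ^ n) atTop (nhds 0)) :
    Tendsto (fun n : ℕ => (n:ℝ) * (1 - v n)) atTop atTop := by
  rw [tendsto_atTop]
  intro C
  set C' : ℝ := max C 1 with hC'
  have hC'pos : 0 < C' := lt_of_lt_of_le one_pos (le_max_right _ _)
  have hsmall : ∀ᶠ n in atTop, v n ^ n < Real.exp (-(2 * C')) := by
    have := h.eventually_lt_const (Real.exp_pos (-(2 * C')))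
    exact this
  have hbig : ∀ᶠ n : ℕ in atTop, (2 * C' : ℝ) ≤ (n : ℝ) :=
    tendsto_natCast_atTop_atTop.eventually_ge_atTop _
  filter_upwards [hsmall, hbig] with n hn hbn
  have hCC : C ≤ C' := le_max_left _ _
  refine le_trans hCC ?_
  by_cases hv : v n ≤ 1 / 2
  · have h1v : (1:ℝ)/2 ≤ 1 - v n := by linarith
    have : C' ≤ (n:ℝ) * (1/2) := by linarith
    calc C' ≤ (n:ℝ) * (1/2) := this
    _ ≤ (n:ℝ) * (1 - v n) := by
        apply mul_le_mul_of_nonneg_left h1v (Nat.cast_nonneg n)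
  · push_neg at hv
    have hvpos : 0 < v n := by linarith
    -- log (v n) ≥ 1 - (v n)⁻¹ ≥ -2 (1 - v n)
    have hlb : 1 - (v n)⁻¹ ≤ Real.log (v n) := by
      have := Real.log_le_sub_one_of_pos (inv_pos.2 hvpos)
      rw [Real.log_inv] at this
      linarith
    have hinv : (v n)⁻¹ ≤ 2 := by
      rw [inv_le_comm₀ hvpos (by norm_num)]
      linarith
    have hlb2 : -(2 * (1 - v n)) ≤ Real.log (v n) := by
      have h1v : 0 ≤ 1 - v n := by linarith [h1 n]
      have h2 : (1 - v n) * (v n)⁻¹ ≤ (1 - v n) * 2 := mul_le_mul_of_nonneg_left hinv h1v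
      have h3 : v n * (v n)⁻¹ = 1 := mul_inv_cancel₀ hvpos.ne'
      nlinarith [hlb, h2, h3]
    have hexp : Real.exp (-(2 * ((n:ℝ) * (1 - v n)))) ≤ v n ^ n := by
      have : (n:ℝ) * -(2 * (1 - v n)) ≤ (n:ℝ) * Real.log (v n) :=
        mul_le_mul_of_nonneg_left hlb2 (Nat.cast_nonneg n)
      calc Real.exp (-(2 * ((n:ℝ) * (1 - v n)))) = Real.exp ((n:ℝ) * -(2 * (1 - v n))) := by
            ring_nf
      _ ≤ Real.exp ((n:ℝ) * Real.log (v n)) := Real.exp_le_exp.2 this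
      _ = v n ^ n := by rw [Real.exp_nat_mul, Real.exp_log hvpos]
    have := lt_of_le_of_lt hexp hn
    have := (Real.exp_lt_exp).1 this
    linarith

/-- Resnick's tail equivalence theorem: if CDFs `U` and `V` are tail equivalent and
`U^K(a_K + b_K x) → G(x)` at continuity points with `G` nondegenerate, then also
`V^K(a_K + b_K x) → G(x)` at continuity points of `G`. -/
theorem tail_equivalence_theorem
    (U V : ℝ → ℝ) (hUmono : Monotone U) (hVmono : Monotone V)
    (hU0 : ∀ x, 0 ≤ U x) (hV0 : ∀ x, 0 ≤ V x)
    (hU1 : ∀ x, U x < 1) (hV1 : ∀ x, V x < 1)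
    (hUtop : Tendsto U atTop (nhds 1)) (hVtop : Tendsto V atTop (nhds 1))
    (htail : Tendsto (fun x => (1 - U x) / (1 - V x)) atTop (nhds 1))
    (a : ℕ → ℝ) (b : ℕ → ℝ) (hb : ∀ K, 0 < b K)
    (G : ℝ → ℝ) (hGnondeg : ∃ x y, G x ≠ G y)
    (hconv : ∀ x, ContinuousAt G x →
      Tendsto (fun K => U (a K + b K * x) ^ K) atTop (nhds (G x))) :
    ∀ x, ContinuousAt G x →
      Tendsto (fun K => V (a K + b K * x) ^ K) atTop (nhds (G x)) := by
  intro x hx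
  set c : ℕ → ℝ := fun n => a n + b n * x with hc
  set u : ℕ → ℝ := fun n => U (c n) with hu
  set v : ℕ → ℝ := fun n => V (c n) with hv
  have hU : Tendsto (fun n => u n ^ n) atTop (nhds (G x)) := hconv x hx
  have hGx0 : 0 ≤ G x :=
    ge_of_tendsto' hU fun n => pow_nonneg (hU0 _) n
  rcases hGx0.lt_or_eq with hL | hL
  · -- G x > 0
    have hlin : Tendsto (fun n : ℕ => (n:ℝ) * (1 - u n)) atTop (nhds (-Real.log (G x))) :=
      lin_tendsto_of_pow u (fun n => hU0 _) (fun n => hU1 _) _ hL hU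
    -- u n → 1
    have hu1 : Tendsto u atTop (nhds 1) := by
      have hsub : Tendsto (fun n => 1 - u n) atTop (nhds 0) := by
        have h2 : Tendsto (fun n : ℕ => ((n:ℝ) * (1 - u n)) * (1 / (n:ℝ))) atTop
            (nhds (-Real.log (G x) * 0)) := hlin.mul tendsto_one_div_atTop_nhds_zero_nat
        rw [mul_zero] at h2
        apply h2.congr'
        filter_upwards [eventually_ge_atTop 1] with n hn
        have : (n:ℝ) ≠ 0 := Nat.cast_ne_zero.2 (by omega)
        field_simp
      have := (tendsto_const_nhds (x := (1:ℝ)) (f := atTop)).sub hsub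
      simpa using this
    -- c n → ∞
    have hcT : Tendsto c atTop atTop := by
      rw [tendsto_atTop]
      intro M
      have := hu1.eventually_const_lt (hU1 M)
      filter_upwards [this] with n hn
      by_contra hM
      push_neg at hM
      exact absurd (hUmono hM.le) (not_le.2 hn)
    have hr : Tendsto (fun n => (1 - u n) / (1 - v n)) atTop (nhds 1) := htail.comp hcT
    have hlinv : Tendsto (fun n : ℕ => (n:ℝ) * (1 - v n)) atTop (nhds (-Real.log (G x))) := by
      have h2 : Tendsto (fun n : ℕ => ((n:ℝ) * (1 - u n)) * ((1 - u n) / (1 - v n))⁻¹) atTop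
          (nhds (-Real.log (G x) * 1⁻¹)) := hlin.mul (hr.inv₀ one_ne_zero)
      rw [inv_one, mul_one] at h2
      apply h2.congr
      intro n
      have h1u : (0:ℝ) < 1 - u n := by linarith [hU1 (c n)]
      have h1v : (0:ℝ) < 1 - v n := by linarith [hV1 (c n)]
      field_simp
    have := pow_tendsto_of_lin v (fun n => hV0 _) (fun n => hV1 _) _ hlinv
    rwa [neg_neg, Real.exp_log hL] at this
  · -- G x = 0
    rw [← hL] at hU ⊢
    have hlin : Tendsto (fun n : ℕ => (n:ℝ) * (1 - u n)) atTop atTop :=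
      lin_atTop_of_pow_zero u (fun n => hU0 _) (fun n => hU1 _) hU
    -- choose M with ratio ≥ 1/2 for y ≥ M
    obtain ⟨M, hM⟩ : ∃ M, ∀ y ≥ M, (1 - U y) / (1 - V y) ≤ 2 := by
      have := htail.eventually_lt_const (by norm_num : (1:ℝ) < 2)
      rw [eventually_atTop] at this
      obtain ⟨M, hM⟩ := this
      exact ⟨M, fun y hy => (hM y hy).le⟩
    have hbound : ∀ᶠ n in atTop, v n ^ n ≤
        max ((max (V M) 0) ^ n) (Real.exp (-((n:ℝ) * (1 - u n) / 2))) := by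
      filter_upwards with n
      by_cases hcn : M ≤ c n
      · refine le_trans ?_ (le_max_right _ _)
        have hr := hM (c n) hcn
        have h1v : (0:ℝ) < 1 - v n := by linarith [hV1 (c n)]
        -- 1 - v n ≥ (1 - u n)/2
        have key : (1 - u n) / 2 ≤ 1 - v n := by
          rw [div_le_iff₀ h1v] at hr
          have hru : U (c n) = u n := rfl
          rw [hru] at hr
          linarith
        have hvle : v n ≤ 1 - (1 - u n)/2 := by linarith
        have hexp : 1 - (1 - u n)/2 ≤ Real.exp (-((1 - u n)/2)) := by
          have := Real.add_one_le_exp (-((1 - u n)/2))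
          linarith
        calc v n ^ n ≤ (Real.exp (-((1 - u n)/2))) ^ n :=
              pow_le_pow_left₀ (hV0 _) (hvle.trans hexp) n
        _ = Real.exp (-((n:ℝ) * (1 - u n) / 2)) := by
              rw [← Real.exp_nat_mul]; ring_nf
      · refine le_trans ?_ (le_max_left _ _)
        push_neg at hcn
        have : v n ≤ V M := hVmono hcn.le
        exact pow_le_pow_left₀ (hV0 _) (this.trans (le_max_left _ _)) n
    have hb1 : Tendsto (fun n => (max (V M) 0) ^ n) atTop (nhds 0) :=
      tendsto_pow_atTop_nhds_zero_of_lt_one (le_max_right _ _)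
        (max_lt (hV1 M) one_pos)
    have hb2 : Tendsto (fun n : ℕ => Real.exp (-((n:ℝ) * (1 - u n) / 2))) atTop (nhds 0) := by
      apply Real.tendsto_exp_atBot.comp
      apply tendsto_neg_atBot_iff.2
      exact (hlin.atTop_div_const (by norm_num : (0:ℝ) < 2))
    have hmax : Tendsto (fun n : ℕ => max ((max (V M) 0) ^ n)
        (Real.exp (-((n:ℝ) * (1 - u n) / 2)))) atTop (nhds 0) := by
      have := hb1.max hb2
      simpa using this
    exact tendsto_of_tendsto_of_tendsto_of_le_of_le' tendsto_const_nhds hmax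
      (Eventually.of_forall fun n => pow_nonneg (hV0 _) n) hbound
end

section
/- If Λ_K is the maximum of K i.i.d. random variables with CDF F, and (Λ_K - a_K)/b_K converges weakly to a nondegenerate G, and κ(K) is a sequence of random sample sizes with κ(K)/K → θ in probability for a positive random variable θ independent of the samples, then P(Λ_{κ(K)} < a_K + b_K x) → ∫ G(x)^y dP(θ < y). -/
open MeasureTheory ProbabilityTheory Filter

private lemma abs_exp_sub_exp_le {u v : ℝ} (hu : u ≤ 0) (hv : v ≤ 0) :
    |Real.exp u - Real.exp v| ≤ |u - v| := by
  wlog h : v ≤ u generalizing u v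
  · rw [abs_sub_comm, abs_sub_comm u v]; exact this hv hu (le_of_not_ge h)
  have h1 : Real.exp (v - u) ≥ 1 + (v - u) := Real.add_one_le_exp _ |>.trans_eq' (by ring)
  have h2 : Real.exp v = Real.exp u * Real.exp (v - u) := by rw [← Real.exp_add]; ring_nf
  have h3 : Real.exp u ≤ 1 := Real.exp_le_one_iff.mpr hu
  have h4 : (0:ℝ) < Real.exp u := Real.exp_pos u
  have h5 : Real.exp u - Real.exp v ≤ u - v := by nlinarith
  rw [abs_of_nonneg (by nlinarith [Real.exp_le_exp.mpr h] : (0:ℝ) ≤ Real.exp u - Real.exp v),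
    abs_of_nonneg (by linarith)]
  exact h5

private lemma tendsto_integral_of_meas {Ω : Type*} [MeasurableSpace Ω] (μ : Measure Ω)
    [IsProbabilityMeasure μ] (f : ℕ → Ω → ℝ) (g : Ω → ℝ)
    (hfm : ∀ K, Measurable (f K)) (hgm : Measurable g)
    (hf0 : ∀ K ω, 0 ≤ f K ω) (hf1 : ∀ K ω, f K ω ≤ 1)
    (hg0 : ∀ᵐ ω ∂μ, 0 ≤ g ω) (hg1 : ∀ᵐ ω ∂μ, g ω ≤ 1)
    (h : ∀ ε : ℝ, 0 < ε → Tendsto (fun K => μ {ω | ε ≤ |f K ω - g ω|}) atTop (nhds 0)) :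
    Tendsto (fun K => ∫ ω, f K ω ∂μ) atTop (nhds (∫ ω, g ω ∂μ)) := by
  have hint : ∀ K, Integrable (f K) μ := fun K =>
    (integrable_const 1).mono' (hfm K).aestronglyMeasurable
      (ae_of_all _ fun ω => by rw [Real.norm_eq_abs, abs_of_nonneg (hf0 K ω)]; exact hf1 K ω)
  have hgint : Integrable g μ :=
    (integrable_const 1).mono' hgm.aestronglyMeasurable
      (by filter_upwards [hg0, hg1] with ω h0 h1; rw [Real.norm_eq_abs, abs_of_nonneg h0]; exact h1)
  rw [Metric.tendsto_atTop]
  intro ε hε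
  have h4 : (0:ℝ) < ε/4 := by linarith
  have htr : Tendsto (fun K => (μ {ω | ε/4 ≤ |f K ω - g ω|}).toReal) atTop (nhds 0) := by
    have := (ENNReal.tendsto_toReal (a := 0) (by simp)).comp (h (ε/4) h4)
    simpa [Function.comp_def] using this
  rw [Metric.tendsto_atTop] at htr
  obtain ⟨N, hN⟩ := htr (ε/4) h4
  refine ⟨N, fun K hK => ?_⟩
  set B := {ω | ε/4 ≤ |f K ω - g ω|} with hB
  have hBm : MeasurableSet B := measurableSet_le measurable_const ((hfm K).sub hgm).abs
  have hBsmall : (μ B).toReal < ε/4 := by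
    have := hN K hK; rwa [Real.dist_eq, sub_zero, abs_of_nonneg ENNReal.toReal_nonneg] at this
  have hptwise : ∀ᵐ ω ∂μ, |f K ω - g ω| ≤ ε/4 + B.indicator (fun _ => 1) ω := by
    filter_upwards [hg0, hg1] with ω h0 h1
    by_cases hω : ω ∈ B
    · rw [Set.indicator_of_mem hω]
      have : |f K ω - g ω| ≤ 1 := abs_le.mpr ⟨by linarith [hf0 K ω, hf1 K ω], by linarith [hf0 K ω, hf1 K ω]⟩
      linarith
    · rw [Set.indicator_of_notMem hω]
      rw [hB, Set.mem_setOf_eq, not_le] at hω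
      linarith
  have hkey : ∫ ω, |f K ω - g ω| ∂μ ≤ ε/4 + (μ B).toReal := by
    have hi1 : Integrable (fun ω => |f K ω - g ω|) μ := ((hint K).sub hgint).abs
    have hi2 : Integrable (fun ω => ε/4 + B.indicator (fun _ => (1:ℝ)) ω) μ :=
      (integrable_const _).add ((integrable_const 1).indicator hBm)
    calc ∫ ω, |f K ω - g ω| ∂μ ≤ ∫ ω, (ε/4 + B.indicator (fun _ => (1:ℝ)) ω) ∂μ :=
          integral_mono_ae hi1 hi2 hptwise
      _ = ε/4 + (μ B).toReal := by
          rw [integral_add (integrable_const _) ((integrable_const 1).indicator hBm),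
            integral_const, integral_indicator_const _ hBm]
          simp
          rfl
  rw [Real.dist_eq]
  calc |∫ ω, f K ω ∂μ - ∫ ω, g ω ∂μ| = |∫ ω, (f K ω - g ω) ∂μ| := by
        rw [integral_sub (hint K) hgint]
    _ ≤ ∫ ω, |f K ω - g ω| ∂μ := by
        simpa [Real.norm_eq_abs] using norm_integral_le_integral_norm (fun ω => f K ω - g ω) (μ := μ)
    _ ≤ ε/4 + (μ B).toReal := hkey
    _ < ε := by linarith

/-- Berman's theorem on extremes with random sample size: if the normalized maximum
`(Λ_K - a_K)/b_K` of i.i.d. variables converges weakly to a nondegenerate `G`, and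
`κ(K)/K → θ` in probability with `θ > 0` a.s. and `(κ, θ)` independent of the samples,
then `P(Λ_{κ(K)} < a_K + b_K x) → ∫ G(x)^y dP(θ < y) = E[G(x)^θ]`. -/
theorem extremes_random_sample_size
    {Ω : Type*} [MeasurableSpace Ω] (μ : Measure Ω) [IsProbabilityMeasure μ]
    (X : ℕ → Ω → ℝ) (hX : ∀ i, Measurable (X i))
    (hindep : iIndepFun X μ)
    (hident : ∀ i, IdentDistrib (X i) (X 0) μ μ)
    (Λ : ℕ → Ω → ℝ) (hΛ : ∀ n ω, Λ n ω = ⨆ i : Fin n, X i ω)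
    (a : ℕ → ℝ) (b : ℕ → ℝ) (hb : ∀ K, 0 < b K)
    (G : ℝ → ℝ) (hGnondeg : ∃ x y, G x ≠ G y)
    (hconv : ∀ x, ContinuousAt G x →
      Tendsto (fun K => (μ {ω | (Λ K ω - a K) / b K < x}).toReal) atTop (nhds (G x)))
    (κ : ℕ → Ω → ℕ) (hκ : ∀ K, Measurable (κ K))
    (θ : Ω → ℝ) (hθ : Measurable θ) (hθpos : ∀ᵐ ω ∂μ, 0 < θ ω)
    (hprob : ∀ ε : ℝ, 0 < ε →
      Tendsto (fun K => μ {ω | ε ≤ |(κ K ω : ℝ) / K - θ ω|}) atTop (nhds 0))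
    (hindep2 : Indep
      (MeasurableSpace.comap (fun ω (i : ℕ) => X i ω) inferInstance)
      (MeasurableSpace.comap (fun ω => ((fun K => κ K ω, θ ω) : (ℕ → ℕ) × ℝ)) inferInstance)
      μ) :
    ∀ x, ContinuousAt G x →
      Tendsto (fun K => (μ {ω | Λ (κ K ω) ω < a K + b K * x}).toReal) atTop
        (nhds (∫ ω, G x ^ (θ ω) ∂μ)) := by
  intro x hx
  set c := G x with hc
  set s : ℕ → ℝ := fun K => a K + b K * x with hs
  set F : ℕ → ℝ := fun K => (μ {ω | X 0 ω < s K}).toReal with hF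
  have hXset : ∀ (i : ℕ) (r : ℝ), MeasurableSet {ω | X i ω < r} := fun i r =>
    measurableSet_lt (hX i) measurable_const
  -- event equality for max, n ≥ 1
  have hmaxset : ∀ (n : ℕ) (r : ℝ),
      {ω | Λ (n+1) ω < r} = ⋂ i ∈ Finset.range (n+1), {ω | X i ω < r} := by
    intro n r
    ext ω
    simp only [Set.mem_setOf_eq, Set.mem_iInter, Finset.mem_range, hΛ]
    rw [← Finset.sup'_univ_eq_ciSup, Finset.sup'_lt_iff]
    constructor
    · intro h i hi; exact h ⟨i, hi⟩ (Finset.mem_univ _)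
    · intro h i _; exact h i i.isLt
  have hmax_meas : ∀ (n : ℕ) (r : ℝ), MeasurableSet {ω | Λ n ω < r} := by
    intro n r
    cases n with
    | zero =>
      have h0 : {ω | Λ 0 ω < r} = {_ω | (0:ℝ) < r} := by
        ext ω; simp [hΛ]
      rw [h0]; exact MeasurableSet.const _
    | succ n =>
      rw [hmaxset]
      exact MeasurableSet.biInter (Set.to_countable _) fun i _ => hXset i r
  -- product formula
  have hprodf : ∀ (n : ℕ) (r : ℝ), μ {ω | Λ (n+1) ω < r} = μ {ω | X 0 ω < r} ^ (n+1) := by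
    intro n r
    rw [hmaxset]
    have hpre : (⋂ i ∈ Finset.range (n+1), {ω | X i ω < r})
        = ⋂ i ∈ Finset.range (n+1), X i ⁻¹' Set.Iio r := rfl
    rw [hpre, hindep.meas_biInter (fun i _ => ⟨Set.Iio r, measurableSet_Iio, rfl⟩)]
    have heq : ∀ i ∈ Finset.range (n+1), μ (X i ⁻¹' Set.Iio r) = μ {ω | X 0 ω < r} := fun i _ =>
      (hident i).measure_mem_eq measurableSet_Iio
    rw [Finset.prod_congr rfl heq, Finset.prod_const, Finset.card_range]
  have hF0 : ∀ K, 0 ≤ F K := fun K => ENNReal.toReal_nonneg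
  have hF1 : ∀ K, F K ≤ 1 := by
    intro K
    have := prob_le_one (μ := μ) (s := {ω | X 0 ω < s K})
    simpa [hF] using ENNReal.toReal_mono (by simp) this
  have hFk : Tendsto (fun K => F K ^ K) atTop (nhds c) := by
    apply (hconv x hx).congr'
    filter_upwards [eventually_ge_atTop 1] with K hK
    have hset : {ω | (Λ K ω - a K) / b K < x} = {ω | Λ K ω < s K} := by
      ext ω; simp only [Set.mem_setOf_eq, hs]
      rw [div_lt_iff₀ (hb K)]
      constructor <;> intro h <;> nlinarith [mul_comm (b K) x]
    obtain ⟨n, rfl⟩ : ∃ n, K = n + 1 := ⟨K - 1, (Nat.succ_pred_eq_of_pos hK).symm⟩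
    rw [hset, hprodf n, ENNReal.toReal_pow]
  have hc0 : 0 ≤ c := ge_of_tendsto' hFk fun K => pow_nonneg (hF0 K) K
  have hc1 : c ≤ 1 := le_of_tendsto' hFk fun K => pow_le_one₀ (hF0 K) (hF1 K)

  -- basic measurability for κ level sets
  have hkap_meas : ∀ K n, MeasurableSet {ω | κ K ω = n} := fun K n =>
    hκ K (measurableSet_singleton n)
  have hkap_disj : ∀ K, Pairwise (Function.onFun Disjoint fun n => {ω | κ K ω = n}) := by
    intro K i j hij
    exact Set.disjoint_left.mpr fun ω hωi hωj => hij (hωi.symm.trans hωj)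
  -- decomposition of the random-index event
  have hdecomp : ∀ K, μ {ω | Λ (κ K ω) ω < s K}
      = ∑' n, μ ({ω | κ K ω = n} ∩ {ω | Λ n ω < s K}) := by
    intro K
    have hunion : {ω | Λ (κ K ω) ω < s K} = ⋃ n, ({ω | κ K ω = n} ∩ {ω | Λ n ω < s K}) := by
      ext ω
      simp only [Set.mem_iUnion, Set.mem_inter_iff, Set.mem_setOf_eq]
      exact ⟨fun h => ⟨κ K ω, rfl, h⟩, fun ⟨n, hn, h⟩ => hn ▸ h⟩
    rw [hunion, measure_iUnion ?_ (fun n => (hkap_meas K n).inter (hmax_meas n _))]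
    intro i j hij
    exact Set.disjoint_left.mpr fun ω hωi hωj => hij (hωi.1.symm.trans hωj.1)
  -- independence factorization
  have hfact : ∀ K n r, μ ({ω | κ K ω = n} ∩ {ω | Λ n ω < r})
      = μ {ω | κ K ω = n} * μ {ω | Λ n ω < r} := by
    intro K n r
    have h2 : MeasurableSet[MeasurableSpace.comap
        (fun ω => ((fun K => κ K ω, θ ω) : (ℕ → ℕ) × ℝ)) inferInstance] {ω | κ K ω = n} :=
      ⟨(fun p : (ℕ → ℕ) × ℝ => p.1 K) ⁻¹' {n},
        ((measurable_pi_apply K).comp measurable_fst) (measurableSet_singleton n), rfl⟩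
    have h1 : MeasurableSet[MeasurableSpace.comap
        (fun ω (i : ℕ) => X i ω) inferInstance] {ω | Λ n ω < r} := by
      cases n with
      | zero =>
        by_cases h0 : (0:ℝ) < r
        · have he : {ω | Λ 0 ω < r} = Set.univ := by ext ω; simp [hΛ, h0]
          exact ⟨Set.univ, MeasurableSet.univ, by rw [Set.preimage_univ]; exact he.symm⟩
        · have he : {ω | Λ 0 ω < r} = ∅ := by ext ω; simp [hΛ, h0]
          exact ⟨∅, MeasurableSet.empty, by rw [Set.preimage_empty]; exact he.symm⟩
      | succ m =>
        refine ⟨⋂ i ∈ Finset.range (m+1), (fun g : ℕ → ℝ => g i) ⁻¹' Set.Iio r, ?_, ?_⟩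
        · exact MeasurableSet.biInter (Set.to_countable _)
            fun i _ => (measurable_pi_apply i) measurableSet_Iio
        · rw [hmaxset]
          ext ω
          simp [Set.mem_iInter]
    rw [Set.inter_comm, (Indep_iff _ _ _).mp hindep2 _ _ h1 h2, mul_comm]
  -- real-valued identity for the target sequence
  have key_eq : ∀ K, (μ {ω | Λ (κ K ω) ω < s K}).toReal
      = ∑' n, (μ {ω | κ K ω = n}).toReal * (μ {ω | Λ n ω < s K}).toReal := by
    intro K
    rw [hdecomp K, ENNReal.tsum_toReal_eq (fun n => measure_ne_top μ _)]
    exact tsum_congr fun n => by rw [hfact, ENNReal.toReal_mul]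
  -- integral of F^κ
  have hint_eq : ∀ K, ∫ ω, F K ^ κ K ω ∂μ = ∑' n, (μ {ω | κ K ω = n}).toReal * F K ^ n := by
    intro K
    have hmap : IsProbabilityMeasure (Measure.map (κ K) μ) :=
      Measure.isProbabilityMeasure_map (hκ K).aemeasurable
    have hintm : Integrable (fun n : ℕ => F K ^ n) (Measure.map (κ K) μ) :=
      (integrable_const 1).mono' measurable_from_top.aestronglyMeasurable
        (ae_of_all _ fun n => by
          rw [Real.norm_eq_abs, abs_of_nonneg (pow_nonneg (hF0 K) n)]
          exact pow_le_one₀ (hF0 K) (hF1 K))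
    have := integral_map (μ := μ) (hκ K).aemeasurable
      (f := fun n : ℕ => F K ^ n) measurable_from_top.aestronglyMeasurable
    rw [← this, integral_countable' hintm]
    refine tsum_congr fun n => ?_
    rw [measureReal_def, Measure.map_apply (hκ K) (measurableSet_singleton n), smul_eq_mul]
    rfl
  -- summability
  have hm_sum_ne_top : ∀ K, (∑' n, μ {ω | κ K ω = n}) ≠ ⊤ := by
    intro K
    rw [← measure_iUnion (hkap_disj K) (hkap_meas K)]
    exact measure_ne_top μ _
  have hm_summable : ∀ K, Summable (fun n => (μ {ω | κ K ω = n}).toReal) := fun K =>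
    ENNReal.summable_toReal (hm_sum_ne_top K)
  -- difference bound
  have hdiff : ∀ K, |(μ {ω | Λ (κ K ω) ω < s K}).toReal - ∫ ω, F K ^ κ K ω ∂μ|
      ≤ (μ {ω | κ K ω = 0}).toReal := by
    intro K
    rw [key_eq K, hint_eq K]
    have hprob_le : ∀ (t : Set Ω), (μ t).toReal ≤ 1 := fun t => by
      simpa using ENNReal.toReal_mono (by simp) (prob_le_one (μ := μ) (s := t))
    have hsA : Summable (fun n => (μ {ω | κ K ω = n}).toReal * (μ {ω | Λ n ω < s K}).toReal) := by
      refine (hm_summable K).of_nonneg_of_le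
        (fun n => mul_nonneg ENNReal.toReal_nonneg ENNReal.toReal_nonneg) (fun n => ?_)
      exact mul_le_of_le_one_right ENNReal.toReal_nonneg (hprob_le _)
    have hsB : Summable (fun n => (μ {ω | κ K ω = n}).toReal * F K ^ n) := by
      refine (hm_summable K).of_nonneg_of_le
        (fun n => mul_nonneg ENNReal.toReal_nonneg (pow_nonneg (hF0 K) n)) (fun n => ?_)
      exact mul_le_of_le_one_right ENNReal.toReal_nonneg (pow_le_one₀ (hF0 K) (hF1 K))
    rw [← Summable.tsum_sub hsA hsB]
    have hterm : ∀ n, (μ {ω | κ K ω = n}).toReal * (μ {ω | Λ n ω < s K}).toReal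
        - (μ {ω | κ K ω = n}).toReal * F K ^ n
        = if n = 0 then (μ {ω | κ K ω = 0}).toReal * ((μ {ω | Λ 0 ω < s K}).toReal - 1) else 0 := by
      intro n
      cases n with
      | zero => simp; ring
      | succ m =>
        simp only [Nat.succ_ne_zero, if_false]
        rw [hprodf m (s K), ENNReal.toReal_pow]
        ring
    rw [tsum_congr hterm, tsum_ite_eq]
    rw [abs_mul]
    have h1 : |(μ {ω | Λ 0 ω < s K}).toReal - 1| ≤ 1 :=
      abs_le.mpr ⟨by linarith [ENNReal.toReal_nonneg (a := μ {ω | Λ 0 ω < s K})],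
        by linarith [hprob_le {ω | Λ 0 ω < s K}]⟩
    calc |(μ {ω | κ K ω = 0}).toReal| * |(μ {ω | Λ 0 ω < s K}).toReal - 1|
        ≤ |(μ {ω | κ K ω = 0}).toReal| * 1 := by
          exact mul_le_mul_of_nonneg_left h1 (abs_nonneg _)
      _ = (μ {ω | κ K ω = 0}).toReal := by
          rw [mul_one, abs_of_nonneg ENNReal.toReal_nonneg]

  -- θ is a.s. positive: null sets
  have hnull : μ {ω | θ ω ≤ 0} = 0 := by
    have := hθpos
    rw [MeasureTheory.ae_iff] at this
    simpa [not_lt] using this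
  have hsmallθ : ∀ η : ENNReal, 0 < η → ∃ δ : ℝ, 0 < δ ∧ μ {ω | θ ω ≤ δ} < η := by
    intro η hη
    have hmeas : ∀ r : ℝ, MeasurableSet {ω | θ ω ≤ r} := fun r =>
      measurableSet_le hθ measurable_const
    have hanti : Antitone (fun n : ℕ => {ω | θ ω ≤ (1:ℝ)/(n+1)}) := by
      intro m n hmn ω hω
      simp only [Set.mem_setOf_eq] at hω ⊢
      refine hω.trans (by
        apply one_div_le_one_div_of_le (by positivity)
        exact_mod_cast Nat.add_le_add_right hmn 1)
    have h1 : Tendsto (μ ∘ fun n : ℕ => {ω | θ ω ≤ (1:ℝ)/(n+1)}) atTop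
        (nhds (μ (⋂ n : ℕ, {ω | θ ω ≤ (1:ℝ)/(n+1)}))) :=
      tendsto_measure_iInter_atTop (fun n => (hmeas _).nullMeasurableSet) hanti
        ⟨0, measure_ne_top μ _⟩
    have h2 : (⋂ n : ℕ, {ω | θ ω ≤ (1:ℝ)/(n+1)}) = {ω | θ ω ≤ 0} := by
      ext ω
      simp only [Set.mem_iInter, Set.mem_setOf_eq]
      constructor
      · intro h
        by_contra hpos
        push_neg at hpos
        obtain ⟨n, hn⟩ := exists_nat_one_div_lt hpos
        exact absurd (h n) (not_le.mpr hn)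
      · intro h n
        exact h.trans (by positivity)
    rw [h2, hnull] at h1
    have := h1.eventually (gt_mem_nhds hη)
    obtain ⟨n, hn⟩ := this.exists
    exact ⟨(1:ℝ)/(n+1), by positivity, hn⟩
  have hbigθ : ∀ η : ENNReal, 0 < η → ∃ M : ℝ, 0 < M ∧ μ {ω | M ≤ θ ω} < η := by
    intro η hη
    have hmeas : ∀ r : ℝ, MeasurableSet {ω | r ≤ θ ω} := fun r =>
      measurableSet_le measurable_const hθ
    have hanti : Antitone (fun n : ℕ => {ω | ((n:ℝ)+1) ≤ θ ω}) := by
      intro m n hmn ω hω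
      simp only [Set.mem_setOf_eq] at hω ⊢
      refine le_trans ?_ hω
      exact_mod_cast Nat.add_le_add_right hmn 1
    have h1 : Tendsto (μ ∘ fun n : ℕ => {ω | ((n:ℝ)+1) ≤ θ ω}) atTop
        (nhds (μ (⋂ n : ℕ, {ω | ((n:ℝ)+1) ≤ θ ω}))) :=
      tendsto_measure_iInter_atTop (fun n => (hmeas _).nullMeasurableSet) hanti
        ⟨0, measure_ne_top μ _⟩
    have h2 : (⋂ n : ℕ, {ω | ((n:ℝ)+1) ≤ θ ω}) = ∅ := by
      ext ω
      simp only [Set.mem_iInter, Set.mem_setOf_eq, Set.mem_empty_iff_false, iff_false, not_forall]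
      obtain ⟨n, hn⟩ := exists_nat_gt (θ ω)
      exact ⟨n, by push_neg; linarith⟩
    rw [h2, measure_empty] at h1
    have := h1.eventually (gt_mem_nhds hη)
    obtain ⟨n, hn⟩ := this.exists
    exact ⟨(n:ℝ)+1, by positivity, hn⟩
  -- μ{κ K = 0} → 0
  have hκ0 : Tendsto (fun K => μ {ω | κ K ω = 0}) atTop (nhds 0) := by
    rw [ENNReal.tendsto_atTop_zero]
    intro η hη
    obtain ⟨δ, hδ, hδη⟩ := hsmallθ (η/2) (ENNReal.half_pos hη.ne')
    obtain ⟨N, hN⟩ := ENNReal.tendsto_atTop_zero.mp (hprob δ hδ) (η/2) (ENNReal.half_pos hη.ne')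
    refine ⟨max N 1, fun K hK => ?_⟩
    have hsub : {ω | κ K ω = 0} ⊆ {ω | δ ≤ |(κ K ω : ℝ)/K - θ ω|} ∪ {ω | θ ω ≤ δ} := by
      intro ω hω
      simp only [Set.mem_setOf_eq, Set.mem_union] at hω ⊢
      by_cases hθω : θ ω ≤ δ
      · exact Or.inr hθω
      · left
        push_neg at hθω
        rw [hω]
        rw [Nat.cast_zero, zero_div, zero_sub, abs_neg, abs_of_pos (hδ.trans hθω)]
        exact hθω.le
    calc μ {ω | κ K ω = 0} ≤ μ ({ω | δ ≤ |(κ K ω : ℝ)/K - θ ω|} ∪ {ω | θ ω ≤ δ}) :=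
          measure_mono hsub
      _ ≤ μ {ω | δ ≤ |(κ K ω : ℝ)/K - θ ω|} + μ {ω | θ ω ≤ δ} := measure_union_le _ _
      _ ≤ η/2 + η/2 := add_le_add (hN K (le_trans (le_max_left _ _) hK)) hδη.le
      _ = η := ENNReal.add_halves η

  -- main convergence in measure
  have hmain : ∀ ε : ℝ, 0 < ε →
      Tendsto (fun K => μ {ω | ε ≤ |F K ^ κ K ω - c ^ θ ω|}) atTop (nhds 0) := by
    intro ε hε
    rw [ENNReal.tendsto_atTop_zero]
    intro η hη
    rcases eq_or_lt_of_le hc0 with hcz | hcpos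
    · -- case c = 0
      obtain ⟨δ', hδ', hδ'η⟩ := hsmallθ (η/2) (ENNReal.half_pos hη.ne')
      set δ : ℝ := δ'/2 with hδdef
      have hδ : 0 < δ := by positivity
      set ε' : ℝ := min ε 1 with hε'def
      have hε' : 0 < ε' := lt_min hε one_pos
      obtain ⟨N1, hN1⟩ := ENNReal.tendsto_atTop_zero.mp (hprob δ hδ) (η/2)
        (ENNReal.half_pos hη.ne')
      have hpow_pos : (0:ℝ) < ε' ^ ((1:ℝ)/δ) := Real.rpow_pos_of_pos hε' _
      have hzero : Tendsto (fun K => F K ^ K) atTop (nhds 0) := by rwa [← hcz] at hFk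
      obtain ⟨N2, hN2⟩ := eventually_atTop.mp (hzero.eventually (gt_mem_nhds hpow_pos))
      refine ⟨max (max N1 N2) 1, fun K hK => ?_⟩
      have hK1 : 1 ≤ K := le_trans (le_max_right _ _) hK
      have hKN1 : N1 ≤ K := le_trans ((le_max_left _ _).trans (le_max_left _ _)) hK
      have hKN2 : N2 ≤ K := le_trans ((le_max_right _ _).trans (le_max_left _ _)) hK
      have hsub : {ω | ε ≤ |F K ^ κ K ω - c ^ θ ω|}
          ⊆ {ω | δ ≤ |(κ K ω : ℝ)/K - θ ω|} ∪ {ω | θ ω ≤ δ'} := by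
        intro ω hω
        simp only [Set.mem_setOf_eq, Set.mem_union] at hω ⊢
        by_contra hcon
        push_neg at hcon
        obtain ⟨h1, h2⟩ := hcon
        have hθω : 2*δ < θ ω := by
          have : δ' = 2*δ := by rw [hδdef]; ring
          linarith
        have hKpos : (0:ℝ) < K := by exact_mod_cast hK1
        have hratio : δ < (κ K ω : ℝ)/K := by
          have := abs_lt.mp h1
          linarith
        have hκω : δ * K ≤ (κ K ω : ℝ) := by
          rw [lt_div_iff₀ hKpos] at hratio
          linarith
        have hcθ : c ^ θ ω = 0 := by
          rw [← hcz]
          exact Real.zero_rpow (by linarith : (0:ℝ) < θ ω).ne'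
        rw [hcθ, sub_zero, abs_of_nonneg (pow_nonneg (hF0 K) _)] at hω
        have hFpos : 0 < F K := by
          rcases (hF0 K).lt_or_eq with h | h
          · exact h
          · exfalso
            have hκpos : 0 < κ K ω := by
              have : (0:ℝ) < κ K ω := lt_of_lt_of_le (by positivity) hκω
              exact_mod_cast this
            rw [← h, zero_pow hκpos.ne'] at hω
            linarith
        have hω' : ε' ≤ F K ^ κ K ω := le_trans (min_le_left _ _) hω
        have hstep : F K ^ κ K ω ≤ (F K ^ K) ^ (δ:ℝ) := by
          calc F K ^ κ K ω = F K ^ ((κ K ω : ℝ)) := (Real.rpow_natCast _ _).symm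
            _ ≤ F K ^ (δ * K) := Real.rpow_le_rpow_of_exponent_ge hFpos (hF1 K) hκω
            _ = (F K ^ (K:ℝ)) ^ (δ:ℝ) := by
                rw [← Real.rpow_mul (hF0 K), mul_comm]
            _ = (F K ^ K) ^ (δ:ℝ) := by rw [Real.rpow_natCast]
        have hlt : (F K ^ K) ^ (δ:ℝ) < (ε' ^ ((1:ℝ)/δ)) ^ (δ:ℝ) :=
          Real.rpow_lt_rpow (pow_nonneg (hF0 K) K) (hN2 K hKN2) hδ
        rw [← Real.rpow_mul hε'.le, one_div_mul_cancel hδ.ne', Real.rpow_one] at hlt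
        linarith [le_trans hω' hstep]
      calc μ {ω | ε ≤ |F K ^ κ K ω - c ^ θ ω|}
          ≤ μ ({ω | δ ≤ |(κ K ω : ℝ)/K - θ ω|} ∪ {ω | θ ω ≤ δ'}) := measure_mono hsub
        _ ≤ μ {ω | δ ≤ |(κ K ω : ℝ)/K - θ ω|} + μ {ω | θ ω ≤ δ'} := measure_union_le _ _
        _ ≤ η/2 + η/2 := add_le_add (hN1 K hKN1) hδ'η.le
        _ = η := ENNReal.add_halves η
    · -- case c > 0
      set L : ℝ := |Real.log c| with hLdef
      have hL0 : 0 ≤ L := abs_nonneg _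
      obtain ⟨M, hM0, hMη⟩ := hbigθ (η/2) (ENNReal.half_pos hη.ne')
      set δ : ℝ := min 1 (ε/(2*(L+1))) with hδdef
      have hδ : 0 < δ := lt_min one_pos (by positivity)
      have hδ1 : δ ≤ 1 := min_le_left _ _
      have hδL : δ * L < ε/2 := by
        have h1 : δ ≤ ε/(2*(L+1)) := min_le_right _ _
        have h2 : δ * L ≤ (ε/(2*(L+1))) * L :=
          mul_le_mul_of_nonneg_right h1 hL0
        have h3 : (ε/(2*(L+1))) * L < ε/2 := by
          rw [div_mul_eq_mul_div, div_lt_div_iff₀ (by positivity) (by positivity)]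
          nlinarith
        linarith
      obtain ⟨N1, hN1⟩ := ENNReal.tendsto_atTop_zero.mp (hprob δ hδ) (η/2)
        (ENNReal.half_pos hη.ne')
      have hlog_cont : ContinuousAt Real.log c := Real.continuousAt_log hcpos.ne'
      have hevent : ∀ᶠ K in atTop,
          |Real.log (F K ^ K) - Real.log c| < ε/(2*(M+1)) ∧ 0 < F K ^ K := by
        have h1 : ∀ᶠ K in atTop, 0 < F K ^ K := hFk.eventually (eventually_gt_nhds hcpos)
        have h2 : Tendsto (fun K => Real.log (F K ^ K)) atTop (nhds (Real.log c)) :=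
          hlog_cont.tendsto.comp hFk
        have h3 : ∀ᶠ K in atTop, |Real.log (F K ^ K) - Real.log c| < ε/(2*(M+1)) := by
          have := h2.eventually (Metric.ball_mem_nhds (Real.log c) (by positivity :
            (0:ℝ) < ε/(2*(M+1))))
          filter_upwards [this] with K hK
          rwa [Real.dist_eq] at hK
        filter_upwards [h1, h3] with K hK1 hK3
        exact ⟨hK3, hK1⟩
      obtain ⟨N2, hN2⟩ := eventually_atTop.mp hevent
      refine ⟨max (max N1 N2) 1, fun K hK => ?_⟩
      have hK1 : 1 ≤ K := le_trans (le_max_right _ _) hK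
      have hKN1 : N1 ≤ K := le_trans ((le_max_left _ _).trans (le_max_left _ _)) hK
      have hKN2 : N2 ≤ K := le_trans ((le_max_right _ _).trans (le_max_left _ _)) hK
      obtain ⟨hlogK, hFKpow_pos⟩ := hN2 K hKN2
      have hKpos : (0:ℝ) < K := by exact_mod_cast hK1
      have hFKpos : 0 < F K := by
        rcases (hF0 K).lt_or_eq with h | h
        · exact h
        · exfalso
          rw [← h, zero_pow (by omega : K ≠ 0)] at hFKpow_pos
          exact lt_irrefl 0 hFKpow_pos
      have hsub : {ω | ε ≤ |F K ^ κ K ω - c ^ θ ω|}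
          ⊆ ({ω | δ ≤ |(κ K ω : ℝ)/K - θ ω|} ∪ {ω | M ≤ θ ω}) ∪ {ω | θ ω ≤ 0} := by
        intro ω hω
        simp only [Set.mem_setOf_eq, Set.mem_union] at hω ⊢
        by_contra hcon
        push_neg at hcon
        obtain ⟨⟨h1, h2⟩, h3⟩ := hcon
        -- good event: |κ/K - θ| < δ, θ < M, 0 < θ
        have hrat0 : (0:ℝ) ≤ (κ K ω : ℝ)/K := by positivity
        have habs := abs_lt.mp h1
        have hratM : (κ K ω : ℝ)/K ≤ M + 1 := by
          have : (κ K ω : ℝ)/K < θ ω + δ := by linarith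
          nlinarith
        have hlogF : Real.log (F K ^ K) = (K:ℝ) * Real.log (F K) := by
          rw [Real.log_pow]
        have hA : (κ K ω : ℝ) * Real.log (F K)
            = ((κ K ω : ℝ)/K) * Real.log (F K ^ K) := by
          rw [hlogF]
          field_simp
        have hexpA : F K ^ κ K ω = Real.exp ((κ K ω : ℝ) * Real.log (F K)) := by
          rw [Real.exp_nat_mul, Real.exp_log hFKpos]
        have hexpB : c ^ θ ω = Real.exp (θ ω * Real.log c) := by
          rw [Real.rpow_def_of_pos hcpos, mul_comm]
        have hAneg : (κ K ω : ℝ) * Real.log (F K) ≤ 0 :=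
          mul_nonpos_of_nonneg_of_nonpos (Nat.cast_nonneg _)
            (Real.log_nonpos (hF0 K) (hF1 K))
        have hBneg : θ ω * Real.log c ≤ 0 :=
          mul_nonpos_of_nonneg_of_nonpos h3.le (Real.log_nonpos hc0 hc1)
        have hdiffAB : |(κ K ω : ℝ) * Real.log (F K) - θ ω * Real.log c| < ε := by
          rw [hA]
          have hsplit : ((κ K ω : ℝ)/K) * Real.log (F K ^ K) - θ ω * Real.log c
              = ((κ K ω : ℝ)/K) * (Real.log (F K ^ K) - Real.log c)
                + ((κ K ω : ℝ)/K - θ ω) * Real.log c := by ring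
          rw [hsplit]
          calc |((κ K ω : ℝ)/K) * (Real.log (F K ^ K) - Real.log c)
                + ((κ K ω : ℝ)/K - θ ω) * Real.log c|
              ≤ |((κ K ω : ℝ)/K) * (Real.log (F K ^ K) - Real.log c)|
                + |((κ K ω : ℝ)/K - θ ω) * Real.log c| := abs_add_le _ _
            _ = ((κ K ω : ℝ)/K) * |Real.log (F K ^ K) - Real.log c|
                + |(κ K ω : ℝ)/K - θ ω| * L := by
                rw [abs_mul, abs_mul, abs_of_nonneg hrat0, hLdef]
            _ ≤ (M+1) * (ε/(2*(M+1))) + δ * L := by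
                refine add_le_add ?_ ?_
                · exact mul_le_mul hratM hlogK.le (abs_nonneg _) (by positivity)
                · exact mul_le_mul_of_nonneg_right h1.le hL0
            _ < ε := by
                have hMe : (M+1) * (ε/(2*(M+1))) = ε/2 := by
                  field_simp
                rw [hMe]
                linarith
        have hfinal : |F K ^ κ K ω - c ^ θ ω| < ε := by
          rw [hexpA, hexpB]
          calc |Real.exp ((κ K ω : ℝ) * Real.log (F K)) - Real.exp (θ ω * Real.log c)|
              ≤ |(κ K ω : ℝ) * Real.log (F K) - θ ω * Real.log c| :=
                abs_exp_sub_exp_le hAneg hBneg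
            _ < ε := hdiffAB
        linarith
      calc μ {ω | ε ≤ |F K ^ κ K ω - c ^ θ ω|}
          ≤ μ (({ω | δ ≤ |(κ K ω : ℝ)/K - θ ω|} ∪ {ω | M ≤ θ ω}) ∪ {ω | θ ω ≤ 0}) :=
            measure_mono hsub
        _ ≤ μ ({ω | δ ≤ |(κ K ω : ℝ)/K - θ ω|} ∪ {ω | M ≤ θ ω}) + μ {ω | θ ω ≤ 0} :=
            measure_union_le _ _
        _ ≤ (μ {ω | δ ≤ |(κ K ω : ℝ)/K - θ ω|} + μ {ω | M ≤ θ ω}) + 0 := by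
            rw [hnull]
            exact add_le_add (measure_union_le _ _) le_rfl
        _ ≤ (η/2 + η/2) + 0 := by
            exact add_le_add (add_le_add (hN1 K hKN1) hMη.le) le_rfl
        _ = η := by rw [add_zero, ENNReal.add_halves]

  -- limit function
  have hglim_meas : Measurable fun ω => c ^ θ ω := by
    rcases eq_or_lt_of_le hc0 with h | h
    · have heq : (fun ω => c ^ θ ω)
          = fun ω => (θ ⁻¹' {0}).indicator (fun _ => (1:ℝ)) ω := by
        funext ω
        by_cases hω : θ ω = 0
        · have hmem : ω ∈ θ ⁻¹' {0} := by simp [hω]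
          rw [hω, Real.rpow_zero, Set.indicator_of_mem hmem]
        · have hmem : ω ∉ θ ⁻¹' {0} := by simp [hω]
          rw [← h, Real.zero_rpow hω, Set.indicator_of_notMem hmem]
      rw [heq]
      exact Measurable.indicator measurable_const (hθ (measurableSet_singleton 0))
    · have hcont : Continuous (fun y : ℝ => c ^ y) :=
        continuous_iff_continuousAt.mpr fun y => Real.continuousAt_const_rpow h.ne'
      exact hcont.measurable.comp hθ
  have hglim0 : ∀ᵐ ω ∂μ, 0 ≤ c ^ θ ω := ae_of_all _ fun ω => Real.rpow_nonneg hc0 _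
  have hglim1 : ∀ᵐ ω ∂μ, c ^ θ ω ≤ 1 := by
    filter_upwards [hθpos] with ω hω
    rcases eq_or_lt_of_le hc0 with h | h
    · rw [← h, Real.zero_rpow hω.ne']
      norm_num
    · exact Real.rpow_le_one hc0 hc1 hω.le
  have hg_meas : ∀ K, Measurable (fun ω => F K ^ κ K ω) := fun K =>
    (measurable_from_top (f := fun n : ℕ => F K ^ n)).comp (hκ K)
  have hIconv : Tendsto (fun K => ∫ ω, F K ^ κ K ω ∂μ) atTop (nhds (∫ ω, c ^ θ ω ∂μ)) :=
    tendsto_integral_of_meas μ _ _ hg_meas hglim_meas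
      (fun K ω => pow_nonneg (hF0 K) _) (fun K ω => pow_le_one₀ (hF0 K) (hF1 K))
      hglim0 hglim1 hmain
  have hd0 : Tendsto
      (fun K => (μ {ω | Λ (κ K ω) ω < s K}).toReal - ∫ ω, F K ^ κ K ω ∂μ) atTop (nhds 0) := by
    refine squeeze_zero_norm (a := fun K => (μ {ω | κ K ω = 0}).toReal) (fun K => ?_) ?_
    · rw [Real.norm_eq_abs]
      exact hdiff K
    · have := (ENNReal.tendsto_toReal (a := 0) (by simp)).comp hκ0
      simpa [Function.comp_def] using this
  have hfin := hd0.add hIconv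
  rw [zero_add] at hfin
  refine hfin.congr fun K => ?_
  ring
end

section
/- The CDF F_Z(x) = 1 - e^{-(M/ρ)x}(1+x)^{-(M-1)} belongs to the domain of attraction of the Gumbel distribution: with a_K satisfying F_Z(a_K) = 1 - 1/K and b_K = g(a_K) where g(x) = (1-F_Z(x))/f_Z(x), one has (F_Z(a_K + b_K x))^K → exp(-e^{-x}) for all x; moreover lim_{x→∞} g(x) = ρ/M so one may take b_K = ρ/M eventually. -/
open Filter Real

private lemma sinr_log_slope :
    Tendsto (fun u : ℝ => Real.log (1 + u) / u) (nhdsWithin 0 {0}ᶜ) (nhds 1) := by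
  have h := Real.hasDerivAt_log one_ne_zero
  rw [hasDerivAt_iff_tendsto_slope] at h
  have hmap : Tendsto (fun u : ℝ => 1 + u) (nhdsWithin 0 {0}ᶜ) (nhdsWithin 1 {1}ᶜ) := by
    rw [tendsto_nhdsWithin_iff]
    constructor
    · have : Tendsto (fun u : ℝ => 1 + u) (nhds 0) (nhds 1) := by
        simpa using (continuous_add_left (1:ℝ)).tendsto (0:ℝ)
      exact this.mono_left nhdsWithin_le_nhds
    · filter_upwards [eventually_mem_nhdsWithin] with u hu
      simp only [Set.mem_compl_iff, Set.mem_singleton_iff] at hu ⊢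
      intro h; exact hu (by linarith)
  have h2 := h.comp hmap
  simp only [inv_one] at h2
  refine h2.congr fun u => ?_
  simp [slope, Real.log_one, inv_mul_eq_div]

private lemma sinr_pow_lim {t : ℝ} (ht : 0 < t) {u : ℕ → ℝ} (hu : Tendsto u atTop (nhds t)) :
    Tendsto (fun K : ℕ => (1 - u K / (K : ℝ)) ^ K) atTop (nhds (Real.exp (-t))) := by
  have hpos : ∀ᶠ K : ℕ in atTop, 0 < u K := hu.eventually (eventually_gt_nhds ht)
  have hub : ∀ᶠ K : ℕ in atTop, u K < t + 1 := hu.eventually (eventually_lt_nhds (by linarith))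
  have hKbig : ∀ᶠ K : ℕ in atTop, t + 1 < (K : ℝ) := by
    have := tendsto_natCast_atTop_atTop (R := ℝ)
    exact this.eventually_gt_atTop (t + 1)
  set v : ℕ → ℝ := fun K => -(u K / (K : ℝ)) with hv
  have hv0 : Tendsto v atTop (nhds 0) := by
    have : Tendsto (fun K : ℕ => u K / (K : ℝ)) atTop (nhds 0) := by
      have h1 : Tendsto (fun K : ℕ => ((K : ℝ))⁻¹) atTop (nhds 0) :=
        tendsto_inv_atTop_zero.comp (tendsto_natCast_atTop_atTop (R := ℝ))
      have := hu.mul h1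
      simpa [div_eq_mul_inv] using this
    simpa [hv] using this.neg
  have hvne : ∀ᶠ K : ℕ in atTop, v K ≠ 0 := by
    filter_upwards [hpos, hKbig] with K h1 h2
    have hK0 : (0:ℝ) < (K : ℝ) := by linarith
    have hd : 0 < u K / (K:ℝ) := div_pos h1 hK0
    simp only [hv]
    exact neg_ne_zero.2 (ne_of_gt hd)
  have hvmem : Tendsto v atTop (nhdsWithin 0 {0}ᶜ) := by
    rw [tendsto_nhdsWithin_iff]
    exact ⟨hv0, hvne.mono fun K h => h⟩
  have hslope : Tendsto (fun K => Real.log (1 + v K) / v K) atTop (nhds 1) :=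
    sinr_log_slope.comp hvmem
  have hmain : Tendsto (fun K : ℕ => (K : ℝ) * Real.log (1 + v K)) atTop (nhds (-t)) := by
    have h1 : Tendsto (fun K : ℕ => (-(u K)) * (Real.log (1 + v K) / v K)) atTop
        (nhds (-t)) := by
      have := (hu.neg).mul hslope
      simpa using this
    refine h1.congr' ?_
    filter_upwards [hpos, hKbig, hvne] with K h1 h2 h3
    have hK0 : (0:ℝ) < (K : ℝ) := by linarith
    field_simp [hv]
    simp only [hv]
    field_simp
  have hexp : Tendsto (fun K : ℕ => Real.exp ((K : ℝ) * Real.log (1 + v K))) atTop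
      (nhds (Real.exp (-t))) := (Real.continuous_exp.tendsto _).comp hmain
  refine hexp.congr' ?_
  filter_upwards [hpos, hub, hKbig] with K h1 h2 h3
  have hK0 : (0:ℝ) < (K : ℝ) := by linarith
  have hv1 : 0 < 1 + v K := by
    simp only [hv]
    have : u K / (K:ℝ) < 1 := by
      rw [div_lt_one hK0]; linarith
    linarith
  rw [← Real.log_pow, Real.exp_log (by positivity)]
  simp [hv, sub_eq_add_neg]

private lemma sinr_a_atTop (M : ℕ) (hM : 1 ≤ M) (ρ : ℝ) (hρ : 0 < ρ) (F : ℝ → ℝ)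
    (hF : ∀ x, F x = 1 - Real.exp (-((M : ℝ) / ρ) * x) / (1 + x) ^ (M - 1))
    (a : ℕ → ℝ) (ha : ∀ K : ℕ, 1 ≤ K → F (a K) = 1 - 1 / (K : ℝ)) :
    Tendsto a atTop atTop := by
  set c : ℝ := (M : ℝ) / ρ with hcdef
  have hM0 : (0:ℝ) < (M:ℝ) := by exact_mod_cast Nat.lt_of_lt_of_le Nat.zero_lt_one hM
  have hc : 0 < c := div_pos hM0 hρ
  set m : ℕ := M - 1 with hmdef
  have key : ∀ C : ℝ, 0 ≤ C → ∃ δ > 0, ∀ y, y ≤ C → 1 - F y ≤ 0 ∨ δ ≤ 1 - F y := by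
    intro C hC
    set δ₁ : ℝ := Real.exp (-c * C) / (1 + C) ^ m with hδ₁
    set δ₂ : ℝ := Real.exp c * (c / m) ^ m with hδ₂
    have hδ₁pos : 0 < δ₁ := by positivity
    have hδ₂pos : 0 < δ₂ := by
      rcases Nat.eq_zero_or_pos m with hm | hm
      · simp [hδ₂, hm, Real.exp_pos]
      · have : (0:ℝ) < (m:ℝ) := by exact_mod_cast hm
        positivity
    refine ⟨min δ₁ δ₂, lt_min hδ₁pos hδ₂pos, fun y hy => ?_⟩
    have h1F : 1 - F y = Real.exp (-c * y) / (1 + y) ^ m := by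
      rw [hF]; ring
    rcases lt_or_ge (-1 : ℝ) y with hy1 | hy1
    · right
      rw [h1F]
      refine le_trans (min_le_left _ _) ?_
      rw [hδ₁]
      have h1 : Real.exp (-c * C) ≤ Real.exp (-c * y) := Real.exp_le_exp.2 (by nlinarith)
      have h2 : (1 + y) ^ m ≤ (1 + C) ^ m := pow_le_pow_left₀ (by linarith) (by linarith) m
      have hy0 : (0:ℝ) < 1 + y := by linarith
      exact div_le_div₀ (Real.exp_pos _).le h1 (pow_pos hy0 m) h2
    · rcases le_or_gt ((1 + y) ^ m) 0 with hP | hP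
      · left
        rw [h1F]
        exact div_nonpos_of_nonneg_of_nonpos (Real.exp_pos _).le hP
      · right
        rw [h1F]
        refine le_trans (min_le_right _ _) ?_
        rcases Nat.eq_zero_or_pos m with hm | hm
        · simp only [hm, pow_zero, div_one]
          rw [hδ₂, hm]
          simp only [Nat.cast_zero, div_zero, pow_zero, mul_one]
          exact Real.exp_le_exp.2 (by nlinarith)
        · set t : ℝ := -(1 + y) with htdef
          have ht0 : 0 ≤ t := by simp [htdef]; linarith
          have httpos : 0 < t := by
            rcases eq_or_lt_of_le ht0 with h | h
            · exfalso
              have : (1 + y) = 0 := by simp [htdef] at h; linarith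
              rw [this, zero_pow (by omega)] at hP
              exact lt_irrefl _ hP
            · exact h
          have hPle : (1 + y) ^ m ≤ t ^ m := by
            calc (1 + y) ^ m ≤ |(1 + y) ^ m| := le_abs_self _
            _ = |1 + y| ^ m := by rw [abs_pow]
            _ = t ^ m := by rw [abs_of_nonpos (by linarith), htdef]
          have hE : Real.exp (-c * y) = Real.exp c * Real.exp (c * t) := by
            rw [← Real.exp_add]
            congr 1
            simp only [htdef]; ring
          have hexp_ge : (c / m) ^ m * t ^ m ≤ Real.exp (c * t) := by
            have hm0 : (m:ℝ) ≠ 0 := by exact_mod_cast hm.ne'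
            have h1 : Real.exp (c * t) = (Real.exp (c * t / m)) ^ m := by
              rw [← Real.exp_nat_mul]
              congr 1
              field_simp
            rw [h1, ← mul_pow]
            refine pow_le_pow_left₀ (by positivity) ?_ m
            calc c / m * t = c * t / m := by ring
              _ ≤ c * t / m + 1 := by linarith
              _ ≤ Real.exp (c * t / m) := by
                  have := Real.add_one_le_exp (c * t / m); linarith
          calc δ₂ = Real.exp c * ((c / m) ^ m * t ^ m) / t ^ m := by
                rw [hδ₂]; field_simp
          _ ≤ Real.exp c * Real.exp (c * t) / t ^ m := by
                gcongr Real.exp c * ?_ / t ^ m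
          _ = Real.exp (-c * y) / t ^ m := by rw [hE]
          _ ≤ Real.exp (-c * y) / (1 + y) ^ m :=
                div_le_div_of_nonneg_left (Real.exp_pos _).le hP hPle
  rw [tendsto_atTop]
  intro C
  obtain ⟨δ, hδpos, hδ⟩ := key (max C 0) (le_max_right _ _)
  obtain ⟨n, hn⟩ := exists_nat_one_div_lt hδpos
  filter_upwards [eventually_ge_atTop (n + 1)] with K hK
  have hK1 : 1 ≤ K := le_trans (Nat.le_add_left 1 n) hK
  have hFa : 1 - F (a K) = 1 / (K : ℝ) := by rw [ha K hK1]; ring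
  have hKpos : (0:ℝ) < (K:ℝ) := by exact_mod_cast hK1
  have hsmall : 1 / (K : ℝ) < δ := by
    refine lt_of_le_of_lt ?_ hn
    rw [div_le_div_iff₀ hKpos (by positivity)]
    have : ((n:ℝ) + 1) ≤ (K:ℝ) := by exact_mod_cast hK
    linarith
  by_contra hlt
  push_neg at hlt
  have := hδ (a K) (le_trans hlt.le (le_max_left _ _))
  rw [hFa] at this
  rcases this with h | h
  · have : (0:ℝ) < 1 / K := by positivity
    linarith
  · linarith

/-- The SINR CDF `F_Z(x) = 1 - e^{-(M/ρ)x}(1+x)^{-(M-1)}` is in the Gumbel domain of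
attraction: with `a_K` chosen so `F_Z(a_K) = 1 - 1/K` and `b_K = g(a_K)` where
`g = (1 - F_Z)/f_Z`, one has `(F_Z(a_K + b_K x))^K → exp(-e^{-x})`; moreover
`g(x) → ρ/M` as `x → ∞`. -/
theorem sinr_gumbel_domain (M : ℕ) (hM : 1 ≤ M) (ρ : ℝ) (hρ : 0 < ρ)
    (F f g : ℝ → ℝ)
    (hF : ∀ x, F x = 1 - Real.exp (-((M : ℝ) / ρ) * x) / (1 + x) ^ (M - 1))
    (hf : ∀ x, f x = Real.exp (-((M : ℝ) / ρ) * x) / (1 + x) ^ M *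
      (((M : ℝ) / ρ) * (1 + x) + (M : ℝ) - 1))
    (hg : ∀ x, g x = (1 - F x) / f x)
    (a : ℕ → ℝ) (ha : ∀ K : ℕ, 1 ≤ K → F (a K) = 1 - 1 / (K : ℝ))
    (b : ℕ → ℝ) (hb : ∀ K, b K = g (a K)) :
    (∀ x : ℝ, Tendsto (fun K : ℕ => (F (a K + b K * x)) ^ K) atTop
        (nhds (Real.exp (-Real.exp (-x))))) ∧
      Tendsto g atTop (nhds (ρ / M)) := by
  set c : ℝ := (M : ℝ) / ρ with hcdef
  have hM0 : (0:ℝ) < (M:ℝ) := by exact_mod_cast Nat.lt_of_lt_of_le Nat.zero_lt_one hM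
  have hM1 : (1:ℝ) ≤ (M:ℝ) := by exact_mod_cast hM
  have hc : 0 < c := div_pos hM0 hρ
  -- formula for g
  have hgy : ∀ y : ℝ, 0 < y → g y = (1 + y) / (c * (1 + y) + (M:ℝ) - 1) := by
    intro y hy
    have hy0 : (0:ℝ) < 1 + y := by linarith
    have hE : (0:ℝ) < Real.exp (-c * y) := Real.exp_pos _
    have hpow : (1 + y) ^ M = (1 + y) ^ (M - 1) * (1 + y) := by
      conv_lhs => rw [show M = (M - 1) + 1 by omega]
      rw [pow_succ]
    have hD : 0 < c * (1 + y) + (M:ℝ) - 1 := by nlinarith [mul_pos hc hy0]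
    rw [hg, hF, hf, hpow]
    have h1 : (1:ℝ) - (1 - Real.exp (-c * y) / (1 + y) ^ (M - 1))
        = Real.exp (-c * y) / (1 + y) ^ (M - 1) := by ring
    rw [h1]
    have hP : ((1 + y) ^ (M - 1) : ℝ) ≠ 0 := pow_ne_zero _ hy0.ne'
    field_simp
  -- limit of g
  have hglim : Tendsto g atTop (nhds (ρ / M)) := by
    have h1 : Tendsto (fun y : ℝ => 1 + y) atTop atTop :=
      tendsto_atTop_add_const_left _ 1 tendsto_id
    have h2 : Tendsto (fun y : ℝ => ((M:ℝ) - 1) / (1 + y)) atTop (nhds 0) := by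
      simpa [div_eq_mul_inv] using
        (tendsto_const_nhds (x := (M:ℝ) - 1) (f := atTop)).mul h1.inv_tendsto_atTop
    have h3 : Tendsto (fun y : ℝ => c + ((M:ℝ) - 1) / (1 + y)) atTop (nhds c) := by
      simpa using (tendsto_const_nhds (x := c) (f := atTop)).add h2
    have h4 := h3.inv₀ hc.ne'
    have hcinv : c⁻¹ = ρ / (M:ℝ) := by rw [hcdef]; simp [one_div, inv_div]
    rw [hcinv] at h4
    refine Tendsto.congr' ?_ h4
    filter_upwards [eventually_gt_atTop (0:ℝ)] with y hy
    have hy0 : (0:ℝ) < 1 + y := by linarith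
    have hD : 0 < c * (1 + y) + (M:ℝ) - 1 := by nlinarith [mul_pos hc hy0]
    rw [hgy y hy]
    have hDnn : 0 ≤ ((M:ℝ) - 1) / (1 + y) := div_nonneg (by linarith) hy0.le
    have hDen : 0 < c + ((M:ℝ) - 1) / (1 + y) := by linarith
    rw [inv_eq_one_div, div_eq_div_iff hDen.ne' hD.ne']
    field_simp
    ring
  refine ⟨?_, hglim⟩
  have haT : Tendsto a atTop atTop := sinr_a_atTop M hM ρ hρ F hF a ha
  have hbT : Tendsto b atTop (nhds (ρ / M)) := by
    have := hglim.comp haT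
    exact this.congr fun K => (hb K).symm
  intro x
  set z : ℕ → ℝ := fun K => a K + b K * x with hzdef
  have hbx : Tendsto (fun K => b K * x) atTop (nhds (ρ / M * x)) := hbT.mul_const x
  have hzT : Tendsto z atTop atTop := by
    apply tendsto_atTop_mono' atTop ?_
      (tendsto_atTop_add_const_right atTop (ρ / M * x - 1) haT)
    filter_upwards [hbx.eventually (eventually_gt_nhds
      (by linarith : ρ / M * x - 1 < ρ / M * x))] with K hK
    simp only [hzdef, Pi.add_apply]
    linarith
  have hKid : ∀ᶠ K : ℕ in atTop,
      (K:ℝ) = (1 + a K) ^ (M - 1) * Real.exp (c * a K) := by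
    filter_upwards [eventually_ge_atTop 1, haT.eventually (eventually_gt_atTop 0)]
      with K hK1 haK
    have hFa := ha K hK1
    rw [hF] at hFa
    have hKpos : (0:ℝ) < K := by exact_mod_cast hK1
    have hA : (0:ℝ) < 1 + a K := by linarith
    have h1 : Real.exp (-c * a K) / (1 + a K) ^ (M - 1) = 1 / (K:ℝ) := by linarith
    rw [div_eq_div_iff (by positivity) hKpos.ne'] at h1
    have hexp : Real.exp (-c * a K) * Real.exp (c * a K) = 1 := by
      rw [← Real.exp_add]; simp
    calc (K:ℝ) = Real.exp (-c * a K) * (K:ℝ) * Real.exp (c * a K) := by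
          rw [mul_comm (Real.exp (-c * a K)) (K:ℝ), mul_assoc, hexp, mul_one]
    _ = (1 + a K) ^ (M - 1) * Real.exp (c * a K) := by rw [h1]; ring
  set T : ℕ → ℝ := fun K => (K:ℝ) * (1 - F (z K)) with hTdef
  have hTeq : ∀ᶠ K : ℕ in atTop,
      T K = Real.exp (-(c * (b K * x))) * ((1 + a K) / (1 + z K)) ^ (M - 1) := by
    filter_upwards [hKid, haT.eventually (eventually_gt_atTop 0),
      hzT.eventually (eventually_gt_atTop 0)] with K hKid haK hzK
    have hA : (0:ℝ) < 1 + a K := by linarith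
    have hZ : (0:ℝ) < 1 + z K := by linarith
    have hze : -c * z K = -(c * a K) + -(c * (b K * x)) := by
      simp only [hzdef]; ring
    simp only [hTdef, hF]
    rw [show (1:ℝ) - (1 - Real.exp (-c * z K) / (1 + z K) ^ (M - 1))
        = Real.exp (-c * z K) / (1 + z K) ^ (M - 1) by ring]
    rw [hKid, hze, Real.exp_add, div_pow]
    rw [Real.exp_neg (c * a K)]
    field_simp [Real.exp_ne_zero]
  have hexp1 : Tendsto (fun K : ℕ => Real.exp (-(c * (b K * x)))) atTop
      (nhds (Real.exp (-x))) := by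
    have h1 : Tendsto (fun K : ℕ => -(c * (b K * x))) atTop
        (nhds (-(c * (ρ / M * x)))) := (hbx.const_mul c).neg
    have h2 : c * (ρ / M * x) = x := by
      rw [hcdef]; field_simp
    rw [h2] at h1
    exact (Real.continuous_exp.tendsto _).comp h1
  have hratio : Tendsto (fun K : ℕ => (1 + a K) / (1 + z K)) atTop (nhds 1) := by
    have hinv : Tendsto (fun K : ℕ => (1 + a K)⁻¹) atTop (nhds 0) :=
      (tendsto_atTop_add_const_left atTop 1 haT).inv_tendsto_atTop
    have h1 : Tendsto (fun K : ℕ => (b K * x) / (1 + a K)) atTop (nhds 0) := by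
      simpa [div_eq_mul_inv] using hbx.mul hinv
    have h3 : Tendsto (fun K : ℕ => 1 + (b K * x) / (1 + a K)) atTop (nhds 1) := by
      simpa using (tendsto_const_nhds (x := (1:ℝ)) (f := atTop)).add h1
    have h4 := h3.inv₀ one_ne_zero
    simp only [inv_one] at h4
    refine Tendsto.congr' ?_ h4
    filter_upwards [haT.eventually (eventually_gt_atTop 0),
      hzT.eventually (eventually_gt_atTop 0)] with K haK hzK
    have hA : (0:ℝ) < 1 + a K := by linarith
    have hZ : (0:ℝ) < 1 + z K := by linarith
    have hZeq : 1 + z K = (1 + a K) * (1 + (b K * x) / (1 + a K)) := by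
      field_simp [hzdef]
      ring
    have h5 : 0 < (1 + a K) * (1 + b K * x / (1 + a K)) := hZeq ▸ hZ
    have hw : 0 < 1 + b K * x / (1 + a K) := by nlinarith
    rw [hZeq]
    rw [inv_eq_one_div, div_eq_div_iff hw.ne' (mul_pos hA hw).ne']
    ring
  have hTlim : Tendsto T atTop (nhds (Real.exp (-x))) := by
    have h1 := hexp1.mul (hratio.pow (M - 1))
    simp only [one_pow, mul_one] at h1
    exact Tendsto.congr' (hTeq.mono fun K hk => hk.symm) h1
  have hfinal := sinr_pow_lim (Real.exp_pos (-x)) hTlim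
  refine Tendsto.congr' ?_ hfinal
  filter_upwards [eventually_ge_atTop 1] with K hK1
  have hKpos : (0:ℝ) < K := by exact_mod_cast hK1
  have hTK : T K / (K:ℝ) = 1 - F (z K) := by
    rw [hTdef]
    field_simp
  rw [hTK]
  congr 1
  ring
end
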